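/- arXiv:2305.04698 — 5 statements merged into one kernel-verified Lean document; each statement's English description precedes it below -/
import Mathlib

section
/- Let p_1, …, p_k, p_{k+1} be k+1 distinct primes and λ a positive integer with p_α ∣ λ for all α = 1, …, k+1. For each α ≤ k fix an integer m_α ≥ 1, a permutation π_α of {1, …, m_α}, and constants g_{p_α,i}, g_{p_α} ∈ ℤ_λ; define f_α : ℤ_{p_α}^{m_α} → ℤ_λ by f_α = (λ/p_α)·Σ_{i=1}^{m_α−1} v_{p_α,π_α(i)} v_{p_α,π_α(i+1)} + Σ_{i=1}^{m_α} g_{p_α,i} v_{p_α,i} + g_{p_α} (mod λ), and for γ ∈ ℤ_{p_1} × ⋯ × ℤ_{p_k} let a^γ = Σ_{α=1}^{k} f_α + Σ_{α=1}^{k} (λ/p_α)·v_{p_α,π_α(1)}·γ_α (mod λ). Fix g_{p_{k+1},1}, g_{p_{k+1}} ∈ ℤ_λ and define b^γ : ℤ_{p_1}^{m_1} × ⋯ × ℤ_{p_k}^{m_k} × ℤ_{p_{k+1}} → ℤ_λ by b^γ = a^γ + g_{p_{k+1},1}·v_{p_{k+1},1} + g_{p_{k+1}} (mod λ). Then for every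 integer τ with 0 < τ < L' := p_{k+1}·∏_{α=1}^{k} p_α^{m_α} and p_{k+1} ∣ τ, one has Σ_{γ ∈ ℤ_{p_1}×⋯×ℤ_{p_k}} ρ(ψ(b^γ))(τ) = 0; that is, {ψ(b^γ)} is a (∏_{α=1}^{k} p_α, p_{k+1}·∏_{α=1}^{k} p_α^{m_α}, p_{k+1})-multiple shift complementary set. -/
open Finset

/-- `eZMod q x = ω_q^x` where `ω_q = exp(2π√-1/q)`. -/
noncomputable def eZMod (q : ℕ) (x : ZMod q) : ℂ :=
  Complex.exp (2 * (Real.pi : ℂ) * Complex.I * (x.val : ℂ) / (q : ℂ))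

/-- Aperiodic autocorrelation of a sequence of length `L` at shift `τ`. -/
noncomputable def aacf (L : ℕ) (a : ℕ → ℂ) (τ : ℕ) : ℂ :=
  ∑ i ∈ Finset.range (L - τ), a i * (starRingEnd ℂ) (a (i + τ))

/-- For `0 ≤ i < ∏ α, p α ^ m α` written as `i = Σ_α i_α · ∏_{β<α} p_β^{m_β}`
with `0 ≤ i_α < p_α^{m_α}`, `digv p m i α t` is the `t`-th base-`p_α` digit
(1-indexed) of `i_α`, viewed in `ℤ_{p_α}`. -/
def digv {k : ℕ} (p m : Fin k → ℕ) (i : ℕ) : (α : Fin k) → ℕ → ZMod (p α) :=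
  fun α t =>
    (((((i / ∏ β ∈ Finset.Iio α, p β ^ m β) % p α ^ m α) / p α ^ (t - 1)) % p α : ℕ) :
      ZMod (p α))

/-- `EE q z = exp(2πi z / q)` for an integer `z`. -/
noncomputable def EE (q : ℕ) (z : ℤ) : ℂ :=
  Complex.exp (2 * (Real.pi : ℂ) * Complex.I * (z : ℂ) / (q : ℂ))

lemma EE_add (q : ℕ) (z w : ℤ) : EE q (z + w) = EE q z * EE q w := by
  rw [EE, EE, EE, ← Complex.exp_add]
  congr 1
  push_cast
  ring

lemma EE_mul_self (q : ℕ) (hq : q ≠ 0) (z : ℤ) : EE q ((q : ℤ) * z) = 1 := by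
  have : 2 * (Real.pi : ℂ) * Complex.I * (((q : ℤ) * z : ℤ) : ℂ) / (q : ℂ)
      = (z : ℂ) * (2 * (Real.pi : ℂ) * Complex.I) := by
    have : (q : ℂ) ≠ 0 := by exact_mod_cast hq
    push_cast
    field_simp
  rw [EE, this, Complex.exp_int_mul_two_pi_mul_I]

lemma EE_congr {q : ℕ} (hq : q ≠ 0) {z w : ℤ} (h : z ≡ w [ZMOD q]) : EE q z = EE q w := by
  obtain ⟨t, ht⟩ : (q : ℤ) ∣ (z - w) := Int.ModEq.dvd h.symm
  have : z = w + (q : ℤ) * t := by linarith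
  rw [this, EE_add, EE_mul_self q hq, mul_one]

lemma eZMod_eq_EE (q : ℕ) (x : ZMod q) : eZMod q x = EE q (x.val : ℤ) := by
  rw [eZMod, EE]; norm_num

lemma EE_natCast (q : ℕ) (hq : q ≠ 0) (n : ℕ) :
    eZMod q ((n : ℕ) : ZMod q) = EE q (n : ℤ) := by
  haveI : NeZero q := ⟨hq⟩
  rw [eZMod_eq_EE]
  apply EE_congr hq
  rw [ZMod.val_natCast]
  have h1 : ((n % q : ℕ) : ℤ) = (n : ℤ) % (q : ℤ) := by push_cast; ring
  rw [h1]
  exact Int.emod_emod_of_dvd _ dvd_rfl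

lemma EE_conj (q : ℕ) (z : ℤ) : (starRingEnd ℂ) (EE q z) = EE q (-z) := by
  rw [EE, EE, ← Complex.exp_conj]
  congr 1
  simp [map_div₀, Complex.conj_I, map_ofNat]

lemma EE_div_mul (lam pa : ℕ) (hpa : pa ≠ 0) (hdvd : pa ∣ lam) (hlam : lam ≠ 0) (z : ℤ) :
    EE lam (((lam / pa : ℕ) : ℤ) * z) = EE pa z := by
  obtain ⟨c, rfl⟩ := hdvd
  have hc : c ≠ 0 := by rintro rfl; simp at hlam
  rw [EE, EE]
  congr 1
  have h1 : (pa : ℂ) ≠ 0 := by exact_mod_cast hpa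
  have h2 : (c : ℂ) ≠ 0 := by exact_mod_cast hc
  rw [Nat.mul_div_cancel_left c (Nat.pos_of_ne_zero hpa)]
  push_cast
  field_simp

lemma EE_geom (q : ℕ) (hq : 0 < q) (z : ℤ) (hz : ¬ ((q : ℤ) ∣ z)) :
    ∑ d ∈ Finset.range q, EE q (z * d) = 0 := by
  have hpow : ∀ d : ℕ, EE q (z * d) = (EE q z) ^ d := by
    intro d
    induction d with
    | zero => simp [EE]
    | succ n ih =>
        have : z * ((n+1 : ℕ) : ℤ) = z * n + z := by push_cast; ring
        rw [this, EE_add, ih, pow_succ]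
  have hne : EE q z ≠ 1 := by
    intro h
    rw [EE, Complex.exp_eq_one_iff] at h
    obtain ⟨n, hn⟩ := h
    apply hz
    refine ⟨n, ?_⟩
    have hq' : (q : ℂ) ≠ 0 := by exact_mod_cast hq.ne'
    have hpi : (2 * (Real.pi : ℂ) * Complex.I) ≠ 0 := by
      simp [Real.pi_ne_zero, Complex.I_ne_zero, two_ne_zero]
    field_simp at hn
    have h2 : (z : ℂ) * (2 * (Real.pi : ℂ) * Complex.I) = ((q : ℂ) * n) * (2 * (Real.pi : ℂ) * Complex.I) := by
      rw [mul_comm ((z:ℂ))]; rw [hn]; ring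
    have h3 : (z : ℂ) = (q : ℂ) * n := mul_right_cancel₀ hpi h2
    have : (z : ℂ) = (((q * n : ℤ)) : ℂ) := by push_cast; exact h3
    exact_mod_cast this
  simp only [hpow]
  rw [geom_sum_eq hne]
  have : EE q z ^ q = 1 := by
    rw [← hpow q]
    rw [mul_comm]
    exact EE_mul_self q hq.ne' z
  rw [this]
  simp



lemma digit_eq_mod_div (z W pa : ℕ) : z / W % pa = z % (W * pa) / W := by
  rw [Nat.mod_mul_right_div_self]

lemma digit_congr {z w W pa c : ℕ} (hc : W * pa ∣ c) (h : z % c = w % c) :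
    z / W % pa = w / W % pa := by
  have h2 : z % (W * pa) = w % (W * pa) := by
    rw [← Nat.mod_mod_of_dvd z hc, ← Nat.mod_mod_of_dvd w hc, h]
  rw [digit_eq_mod_div, digit_eq_mod_div, h2]

lemma repl_core {z W pa d : ℕ} (hW : 0 < W) (hpa : 0 < pa)
    (hz : z / W % pa = 0) (hd : d < pa) :
    (z + d * W) / (W * pa) = z / (W * pa)
    ∧ (z + d * W) / W % pa = d
    ∧ (z + d * W) % W = z % W := by
  have hdec : z % (W * pa) = z % W := by
    rw [Nat.mod_mul, hz, Nat.mul_zero, Nat.add_zero]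
  have hzeq : z = W * pa * (z / (W * pa)) + z % W := by
    conv_lhs => rw [← Nat.div_add_mod z (W * pa)]
    rw [hdec]
  have hlo : z % W < W := Nat.mod_lt _ hW
  have hr : z % W + d * W < W * pa := by
    have h2 : (d + 1) * W ≤ pa * W := Nat.mul_le_mul_right W (Nat.succ_le_of_lt hd)
    have h3 : (d + 1) * W = d * W + W := by ring
    have h4 : pa * W = W * pa := by ring
    omega
  have hWpa : 0 < W * pa := Nat.mul_pos hW hpa
  have key2 : z + d * W = (z % W + d * W) + (z / (W * pa)) * (W * pa) := by
    conv_lhs => rw [hzeq]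
    ring
  have key : z + d * W = z % W + (d + pa * (z / (W * pa))) * W := by
    conv_lhs => rw [hzeq]
    ring
  refine ⟨?_, ?_, ?_⟩
  · rw [key2, Nat.add_mul_div_right _ _ hWpa, Nat.div_eq_of_lt hr, Nat.zero_add]
  · rw [key, Nat.add_mul_div_right _ _ hW, Nat.div_eq_of_lt hlo, Nat.zero_add,
      Nat.add_mul_mod_self_left, Nat.mod_eq_of_lt hd]
  · simp [Nat.add_mul_mod_self_right]

/-- digits strictly below an aligned weight are unchanged. -/
lemma repl_below {z W d W' pb : ℕ} (hdvd : W' * pb ∣ W) :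
    (z + d * W) / W' % pb = z / W' % pb := by
  obtain ⟨c, hc⟩ := hdvd
  refine digit_congr (dvd_refl _) ?_
  rw [hc, show z + d * (W' * pb * c) = z + (d * c) * (W' * pb) by ring,
    Nat.add_mul_mod_self_right]

/-- positions at or above `W*pa` are unchanged. -/
lemma repl_above {z W pa d W' : ℕ} (hW : 0 < W) (hpa : 0 < pa)
    (hz : z / W % pa = 0) (hd : d < pa) (hdvd : W * pa ∣ W') :
    (z + d * W) / W' = z / W' := by
  obtain ⟨c, hc⟩ := hdvd
  rw [hc, ← Nat.div_div_eq_div_mul (z + d*W) (W*pa) c, ← Nat.div_div_eq_div_mul z (W*pa) c,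
    (repl_core hW hpa hz hd).1]

/-- bound: replacement stays below an aligned bound. -/
lemma repl_lt {z W pa d M : ℕ} (hW : 0 < W) (hpa : 0 < pa)
    (hz : z / W % pa = 0) (hd : d < pa) (hdvd : W * pa ∣ M) (hzM : z < M) :
    z + d * W < M := by
  obtain ⟨c, hc⟩ := hdvd
  have hWpa : 0 < W * pa := Nat.mul_pos hW hpa
  have h2 : z / (W * pa) < c := Nat.div_lt_of_lt_mul (hc ▸ hzM)
  rw [hc]
  calc z + d * W < (z/(W*pa)) * (W*pa) + W*pa := by
        have hm : z % (W*pa) = z % W := by rw [Nat.mod_mul, hz, Nat.mul_zero, Nat.add_zero]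
        have hzd : z = W*pa*(z/(W*pa)) + z % W := by
          conv_lhs => rw [← Nat.div_add_mod z (W*pa)]
          rw [hm]
        have hlo : z % W < W := Nat.mod_lt _ hW
        have h2' : (d + 1) * W ≤ pa * W := Nat.mul_le_mul_right W (Nat.succ_le_of_lt hd)
        have h3' : (d + 1) * W = d * W + W := by ring
        have h4 : pa * W = W * pa := by ring
        have h5 : (z/(W*pa)) * (W*pa) = W*pa*(z/(W*pa)) := by ring
        omega
    _ = (z/(W*pa) + 1) * (W*pa) := by ring
    _ ≤ c * (W*pa) := Nat.mul_le_mul_right _ (by omega)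
    _ = W * pa * c := by ring

/-- replacement mod/div at an aligned modulus `M`. -/
lemma repl_mod_div {z W pa d M : ℕ} (hW : 0 < W) (hpa : 0 < pa) (hM : 0 < M)
    (hz : z / W % pa = 0) (hd : d < pa) (hdvd : W * pa ∣ M) :
    (z + d * W) % M = z % M + d * W ∧ (z + d * W) / M = z / M := by
  have hz' : (z % M) / W % pa = 0 := by
    have : (z % M) % M = z % M := Nat.mod_mod_of_dvd z dvd_rfl
    rw [digit_congr hdvd this]
    exact hz
  have hlt : z % M < M := Nat.mod_lt _ hM
  have hlt2 : z % M + d * W < M := repl_lt hW hpa hz' hd hdvd hlt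
  have key : z + d * W = (z % M + d * W) + (z / M) * M := by
    conv_lhs => rw [← Nat.div_add_mod z M]
    ring
  constructor
  · rw [key, Nat.add_mul_mod_self_right, Nat.mod_eq_of_lt hlt2]
  · rw [key, Nat.add_mul_div_right _ _ hM, Nat.div_eq_of_lt hlt2, Nat.zero_add]

def PP {k : ℕ} (p m : Fin k → ℕ) (α : Fin k) : ℕ := ∏ β ∈ Finset.Iio α, p β ^ m β

def digN {k : ℕ} (p m : Fin k → ℕ) (x : ℕ) (α : Fin k) (t : ℕ) : ℕ :=
  x / PP p m α % p α ^ m α / p α ^ (t - 1) % p α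

lemma digv_eq_digN {k : ℕ} (p m : Fin k → ℕ) (x : ℕ) (α : Fin k) (t : ℕ) :
    digv p m x α t = ((digN p m x α t : ℕ) : ZMod (p α)) := rfl

lemma digN_lt {k : ℕ} (p m : Fin k → ℕ) (x : ℕ) (α : Fin k) (t : ℕ) (hpa : 0 < p α) :
    digN p m x α t < p α := Nat.mod_lt _ hpa

lemma digv_val {k : ℕ} (p m : Fin k → ℕ) (x : ℕ) (α : Fin k) (t : ℕ) (hpa : 0 < p α) :
    (digv p m x α t).val = digN p m x α t := by
  rw [digv_eq_digN, ZMod.val_natCast_of_lt (digN_lt p m x α t hpa)]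

lemma digN_flat {k : ℕ} (p m : Fin k → ℕ) (x : ℕ) (α : Fin k) (t : ℕ)
    (hpa : 0 < p α) (ht1 : 1 ≤ t) (htm : t ≤ m α) :
    digN p m x α t = x / (PP p m α * p α ^ (t - 1)) % p α := by
  rw [digN, ← Nat.div_div_eq_div_mul]
  set z := x / PP p m α with hz
  have hsplit : z = z % p α ^ m α + ((z / p α ^ m α) * p α ^ (m α - t + 1)) * p α ^ (t - 1) := by
    have hpow : p α ^ (m α - t + 1) * p α ^ (t - 1) = p α ^ m α := by
      rw [← pow_add]
      congr 1
      omega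
    calc z = p α ^ m α * (z / p α ^ m α) + z % p α ^ m α := (Nat.div_add_mod z _).symm
      _ = z % p α ^ m α + ((z / p α ^ m α) * p α ^ (m α - t + 1)) * p α ^ (t - 1) := by
          rw [mul_assoc, hpow]; ring
  conv_rhs => rw [hsplit]
  rw [Nat.add_mul_div_right _ _ (pow_pos hpa (t - 1))]
  have hpow2 : p α ^ (m α - t + 1) = p α ^ (m α - t) * p α := by
    rw [pow_succ]
  rw [hpow2, show z % p α ^ m α / p α ^ (t - 1) + z / p α ^ m α * (p α ^ (m α - t) * p α)
      = z % p α ^ m α / p α ^ (t - 1) + (z / p α ^ m α * p α ^ (m α - t)) * p α by ring,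
    Nat.add_mul_mod_self_right]

lemma PP_mul_dvd {k : ℕ} (p m : Fin k → ℕ) (α : Fin k) :
    PP p m α * p α ^ m α ∣ ∏ β, p β ^ m β := by
  have h1 : PP p m α * p α ^ m α = ∏ β ∈ insert α (Finset.Iio α), p β ^ m β := by
    rw [Finset.prod_insert (by simp), PP, mul_comm]
  rw [h1]
  exact Finset.prod_dvd_prod_of_subset _ _ _ (Finset.subset_univ _)

lemma PP_succ_dvd {k : ℕ} (p m : Fin k → ℕ) {β α : Fin k} (h : β < α) :
    PP p m β * p β ^ m β ∣ PP p m α := by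
  have h1 : PP p m β * p β ^ m β = ∏ γ ∈ insert β (Finset.Iio β), p γ ^ m γ := by
    rw [Finset.prod_insert (by simp), PP, mul_comm]
  rw [h1, PP]
  refine Finset.prod_dvd_prod_of_subset _ _ _ ?_
  intro γ hγ
  simp only [Finset.mem_insert, Finset.mem_Iio] at hγ ⊢
  rcases hγ with rfl | hγ
  · exact h
  · exact lt_trans hγ h

/-- comparison of two distinct slots. -/
lemma WW_cmp {k : ℕ} (p m : Fin k → ℕ) {α β : Fin k} {t s : ℕ}
    (ht1 : 1 ≤ t) (htm : t ≤ m α) (hs1 : 1 ≤ s) (hsm : s ≤ m β)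
    (hne : ¬(α = β ∧ t = s)) :
    (PP p m α * p α ^ (t - 1)) * p α ∣ PP p m β * p β ^ (s - 1)
    ∨ (PP p m β * p β ^ (s - 1)) * p β ∣ PP p m α * p α ^ (t - 1) := by
  have key : ∀ (α β : Fin k) (t s : ℕ), 1 ≤ t → t ≤ m α → α < β →
      (PP p m α * p α ^ (t - 1)) * p α ∣ PP p m β * p β ^ (s - 1) := by
    intro α β t s ht1 htm hab
    have h1 : (PP p m α * p α ^ (t - 1)) * p α = PP p m α * p α ^ t := by
      rw [mul_assoc, ← pow_succ]
      congr 2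
      omega
    rw [h1]
    calc PP p m α * p α ^ t ∣ PP p m α * p α ^ m α :=
          mul_dvd_mul_left _ (pow_dvd_pow _ htm)
      _ ∣ PP p m β := PP_succ_dvd p m hab
      _ ∣ PP p m β * p β ^ (s - 1) := dvd_mul_right _ _
  rcases lt_trichotomy α β with hab | hab | hab
  · exact Or.inl (key α β t s ht1 htm hab)
  · subst hab
    have hts : t ≠ s := fun h => hne ⟨rfl, h⟩
    rcases lt_or_gt_of_ne hts with h | h
    · left
      rw [mul_assoc, ← pow_succ, show t - 1 + 1 = t by omega]
      exact mul_dvd_mul_left _ (pow_dvd_pow _ (by omega))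
    · right
      rw [mul_assoc, ← pow_succ, show s - 1 + 1 = s by omega]
      exact mul_dvd_mul_left _ (pow_dvd_pow _ (by omega))
  · exact Or.inr (key β α s t hs1 hsm hab)

lemma WW_dvd_N {k : ℕ} (p m : Fin k → ℕ) (α : Fin k) {t : ℕ}
    (ht1 : 1 ≤ t) (htm : t ≤ m α) :
    (PP p m α * p α ^ (t - 1)) * p α ∣ ∏ β, p β ^ m β := by
  have h1 : (PP p m α * p α ^ (t - 1)) * p α = PP p m α * p α ^ t := by
    rw [mul_assoc, ← pow_succ]
    congr 2
    omega
  rw [h1]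
  calc PP p m α * p α ^ t ∣ PP p m α * p α ^ m α :=
        mul_dvd_mul_left _ (pow_dvd_pow _ htm)
    _ ∣ ∏ β, p β ^ m β := PP_mul_dvd p m α

lemma base_pow_unique' {pa : ℕ} : ∀ {M : ℕ} {a b : ℕ}, a < pa ^ M → b < pa ^ M →
    (∀ t < M, a / pa ^ t % pa = b / pa ^ t % pa) → a = b := by
  intro M
  induction M with
  | zero => intro a b ha hb _; simp at ha hb; omega
  | succ M ih =>
    intro a b ha hb h
    have hpa : 0 < pa := by
      rcases Nat.eq_zero_or_pos pa with h0 | h0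
      · subst h0; simp at ha
      · exact h0
    have h0 : a % pa = b % pa := by
      have := h 0 (Nat.succ_pos M); simpa using this
    have hdig : ∀ t < M, (a / pa) / pa ^ t % pa = (b / pa) / pa ^ t % pa := by
      intro t ht
      rw [Nat.div_div_eq_div_mul, Nat.div_div_eq_div_mul, ← pow_succ']
      exact h (t + 1) (by omega)
    have hab : a / pa < pa ^ M := Nat.div_lt_of_lt_mul (by rw [← pow_succ']; exact ha)
    have hbb : b / pa < pa ^ M := Nat.div_lt_of_lt_mul (by rw [← pow_succ']; exact hb)
    have heq := ih hab hbb hdig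
    have da := Nat.div_add_mod a pa
    have db := Nat.div_add_mod b pa
    have : pa * (a / pa) = pa * (b / pa) := by rw [heq]
    omega

lemma blocks_unique' (Q' : ℕ → ℕ) : ∀ (K : ℕ) (x y : ℕ),
    x < ∏ j ∈ range K, Q' j → y < ∏ j ∈ range K, Q' j →
    (∀ j < K, x / (∏ i ∈ range j, Q' i) % Q' j = y / (∏ i ∈ range j, Q' i) % Q' j) →
    x = y := by
  intro K
  induction K with
  | zero => intro x y hx hy _; simp at hx hy; omega
  | succ K ih =>
    intro x y hx hy h
    rw [prod_range_succ] at hx hy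
    have hNk : 0 < ∏ j ∈ range K, Q' j := by
      rcases Nat.eq_zero_or_pos (∏ j ∈ range K, Q' j) with h0 | h0
      · rw [h0] at hx; simp at hx
      · exact h0
    set Nk := ∏ j ∈ range K, Q' j with hNkdef
    have htop : x / Nk = y / Nk := by
      have hxq : x / Nk < Q' K := Nat.div_lt_of_lt_mul hx
      have hyq : y / Nk < Q' K := Nat.div_lt_of_lt_mul hy
      have := h K (by omega)
      rwa [Nat.mod_eq_of_lt hxq, Nat.mod_eq_of_lt hyq] at this
    have hlow : x % Nk = y % Nk := by
      refine ih (x % Nk) (y % Nk) (Nat.mod_lt _ hNk) (Nat.mod_lt _ hNk) ?_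
      intro j hj
      have hdvd : (∏ i ∈ range j, Q' i) * Q' j ∣ Nk := by
        rw [← prod_range_succ]
        exact Finset.prod_dvd_prod_of_subset _ _ _ (Finset.range_subset_range.mpr (by omega))
      rw [digit_congr hdvd (Nat.mod_mod_of_dvd x dvd_rfl),
        digit_congr hdvd (Nat.mod_mod_of_dvd y dvd_rfl)]
      exact h j (by omega)
    have dx := Nat.div_add_mod x Nk
    have dy := Nat.div_add_mod y Nk
    have : Nk * (x / Nk) = Nk * (y / Nk) := by rw [htop]
    omega

lemma digN_unique {k : ℕ} (p m : Fin k → ℕ) (hp : ∀ α, 0 < p α) {x y : ℕ}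
    (hx : x < ∏ β, p β ^ m β) (hy : y < ∏ β, p β ^ m β)
    (h : ∀ α t, 1 ≤ t → t ≤ m α → digN p m x α t = digN p m y α t) : x = y := by
  have hblock : ∀ α, x / PP p m α % p α ^ m α = y / PP p m α % p α ^ m α := by
    intro α
    refine base_pow_unique' (Nat.mod_lt _ (pow_pos (hp α) _))
      (Nat.mod_lt _ (pow_pos (hp α) _)) ?_
    intro t ht
    have := h α (t + 1) (by omega) (by omega)
    simpa [digN, Nat.add_sub_cancel] using this
  classical
  set Q' : ℕ → ℕ := fun j => if h : j < k then p ⟨j, h⟩ ^ m ⟨j, h⟩ else 1 with hQ'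
  have hQval : ∀ (j : ℕ) (hj : j < k), Q' j = p ⟨j, hj⟩ ^ m ⟨j, hj⟩ := by
    intro j hj; simp [hQ', hj]
  have hN : ∏ j ∈ range k, Q' j = ∏ β, p β ^ m β := by
    rw [← Fin.prod_univ_eq_prod_range Q' k]
    apply Finset.prod_congr rfl
    intro α _
    rw [hQval α.val α.isLt, Fin.eta]
  have hPP : ∀ α : Fin k, ∏ i ∈ range (α : ℕ), Q' i = PP p m α := by
    intro α
    rw [PP]
    refine Finset.prod_nbij' (fun j => if h : j < k then (⟨j, h⟩ : Fin k) else α)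
      (fun β => (β : ℕ)) ?_ ?_ ?_ ?_ ?_
    · intro j hj
      simp only [mem_range] at hj
      have hjk : j < k := lt_trans hj α.isLt
      simp [hjk, Finset.mem_Iio]
      exact hj
    · intro β hβ
      simp only [Finset.mem_Iio] at hβ
      simp [mem_range]
      exact hβ
    · intro j hj
      simp only [mem_range] at hj
      have hjk : j < k := lt_trans hj α.isLt
      simp [hjk]
    · intro β hβ
      simp [β.isLt, Fin.eta]
    · intro j hj
      simp only [mem_range] at hj
      have hjk : j < k := lt_trans hj α.isLt
      simp [hjk, hQval j hjk]
  refine blocks_unique' Q' k x y (by rw [hN]; exact hx) (by rw [hN]; exact hy) ?_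
  intro j hj
  have h1 := hPP ⟨j, hj⟩
  simp only [Fin.val_mk] at h1
  rw [h1, hQval j hj]
  exact hblock ⟨j, hj⟩

lemma digN_exists_ne {k : ℕ} (p m : Fin k → ℕ) (hp : ∀ α, 0 < p α) {x y : ℕ}
    (hx : x < ∏ β, p β ^ m β) (hy : y < ∏ β, p β ^ m β) (hxy : x ≠ y) :
    ∃ α t, 1 ≤ t ∧ t ≤ m α ∧ digN p m x α t ≠ digN p m y α t := by
  by_contra hcon
  push_neg at hcon
  exact hxy (digN_unique p m hp hx hy (fun α t h1 h2 => hcon α t h1 h2))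

lemma base_digit' (z W pa : ℕ) (hW : 0 < W) :
    (z - (z / W % pa) * W) / W % pa = 0
    ∧ (z - (z / W % pa) * W) + (z / W % pa) * W = z := by
  have hdm : z % (W * pa) = z % W + W * (z / W % pa) := Nat.mod_mul
  have hz : z = W * pa * (z / (W * pa)) + z % (W * pa) := by
    conv_lhs => rw [← Nat.div_add_mod z (W * pa)]
  have e1 : (z / W % pa) * W = W * (z / W % pa) := by ring
  have e2 : (pa * (z / (W * pa))) * W = W * pa * (z / (W * pa)) := by ring
  have hb : z - (z / W % pa) * W = z % W + (pa * (z / (W * pa))) * W := by omega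
  constructor
  · rw [hb, Nat.add_mul_div_right _ _ hW, Nat.div_eq_of_lt (Nat.mod_lt _ hW), Nat.zero_add,
      Nat.mul_mod_right]
  · omega

/-- if adding `D*W` to `u` produces digit `D` at weight `W`, the digit of `u` was `0`. -/
lemma digit_force {u W pa D : ℕ} (hW : 0 < W) (hpa : 0 < pa) (hD : D < pa)
    (h : (u + D * W) / W % pa = D) : u / W % pa = 0 := by
  obtain ⟨h0, h1⟩ := base_digit' u W pa hW
  set e := u / W % pa with he
  have he_lt : e < pa := Nat.mod_lt _ hpa
  set u₀ := u - e * W with hu₀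
  by_cases hcase : e + D < pa
  · -- u + D W = u₀ + (e + D) W
    have : u + D * W = u₀ + (e + D) * W := by
      have := h1
      have e3 : (e + D) * W = e * W + D * W := by ring
      omega
    rw [this, (repl_core hW hpa h0 hcase).2.1] at h
    omega
  · exfalso
    set r := e + D - pa with hr
    have hrlt : r < pa := by omega
    have : u + D * W = (u₀ + r * W) + pa * W := by
      have := h1
      have e3 : (e + D) * W = e * W + D * W := by ring
      have e4 : (r + pa) * W = r * W + pa * W := by ring
      have e5 : (e + D) * W = (r + pa) * W := by rw [show e + D = r + pa by omega]
      omega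
    rw [this, show (u₀ + r * W) + pa * W = (u₀ + r * W) + pa * W from rfl] at h
    have hdiv : ((u₀ + r * W) + pa * W) / W = (u₀ + r * W) / W + pa :=
      Nat.add_mul_div_right _ _ hW
    rw [hdiv, Nat.add_mod_right, (repl_core hW hpa h0 hrlt).2.1] at h
    omega

/-- sum of squares-style quadratic difference with a single changed position. -/
lemma quad_sum_diff (M s₀ : ℕ) (hs₁ : 1 ≤ s₀) (hs₂ : s₀ < M) (u v : ℕ → ℤ)
    (huv : ∀ s, 1 ≤ s → s ≤ M → s ≠ s₀ → u s = v s) :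
    (∑ s ∈ Finset.Ico 1 M, u s * u (s+1)) - (∑ s ∈ Finset.Ico 1 M, v s * v (s+1))
      = (u s₀ - v s₀) * v (s₀+1)
        + (if 2 ≤ s₀ then v (s₀-1) * (u s₀ - v s₀) else 0) := by
  have hu1 : u (s₀ + 1) = v (s₀ + 1) := by
    rcases Nat.lt_or_ge (s₀ + 1) (M + 1) with h | h
    · exact huv _ (by omega) (by omega) (by omega)
    · omega
  rw [← Finset.sum_sub_distrib]
  have hsub : Finset.Ico 1 M ∩ {s₀ - 1, s₀} ⊆ Finset.Ico 1 M := Finset.inter_subset_left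
  rw [← Finset.sum_subset hsub (by
    intro s hs hns
    have hsm : s ∈ Finset.Ico 1 M := hs
    rw [Finset.mem_Ico] at hsm
    have hne1 : s ≠ s₀ - 1 := by
      intro hcon
      exact hns (Finset.mem_inter.mpr ⟨hs, by simp [hcon]⟩)
    have hne2 : s ≠ s₀ := by
      intro hcon
      exact hns (Finset.mem_inter.mpr ⟨hs, by simp [hcon]⟩)
    have e1 : u s = v s := huv s (by omega) (by omega) hne2
    have e2 : u (s+1) = v (s+1) := huv (s+1) (by omega) (by omega) (by omega)
    rw [e1, e2]
    ring)]
  by_cases h2 : 2 ≤ s₀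
  · have hint : Finset.Ico 1 M ∩ {s₀ - 1, s₀} = {s₀ - 1, s₀} := by
      rw [Finset.inter_eq_right]
      intro s hs
      simp only [Finset.mem_insert, Finset.mem_singleton] at hs
      rw [Finset.mem_Ico]
      omega
    rw [hint, Finset.sum_pair (by omega : s₀ - 1 ≠ s₀)]
    have e1 : u (s₀ - 1) = v (s₀ - 1) := huv _ (by omega) (by omega) (by omega)
    have e2 : s₀ - 1 + 1 = s₀ := by omega
    rw [if_pos h2, e1, e2, hu1]
    ring
  · have hint : Finset.Ico 1 M ∩ {s₀ - 1, s₀} = {s₀} := by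
      have hs0 : s₀ = 1 := by omega
      subst hs0
      ext s
      simp only [Finset.mem_inter, Finset.mem_Ico, Finset.mem_insert, Finset.mem_singleton]
      omega
    rw [hint, Finset.sum_singleton, if_neg h2, hu1]
    ring

/-- linear sum difference with a single changed position. -/
lemma lin_sum_diff (M c : ℕ) (hc : c ∈ Finset.Icc 1 M) (gg u v : ℕ → ℤ)
    (huv : ∀ s, 1 ≤ s → s ≤ M → s ≠ c → u s = v s) :
    (∑ s ∈ Finset.Icc 1 M, gg s * u s) - (∑ s ∈ Finset.Icc 1 M, gg s * v s)
      = gg c * (u c - v c) := by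
  rw [← Finset.sum_sub_distrib]
  have hsub : ({c} : Finset ℕ) ⊆ Finset.Icc 1 M := by
    intro s hs
    rw [Finset.mem_singleton] at hs
    subst hs
    exact hc
  rw [← Finset.sum_subset hsub (by
    intro s hs hns
    rw [Finset.mem_Icc] at hs
    rw [Finset.mem_singleton] at hns
    rw [huv s (by omega) (by omega) hns]
    ring)]
  rw [Finset.sum_singleton]
  ring


lemma digN_mod {k : ℕ} (p m : Fin k → ℕ) (hp : ∀ α, 0 < p α) (x : ℕ) (β : Fin k) (t : ℕ)
    (ht1 : 1 ≤ t) (htm : t ≤ m β) (NN : ℕ) (hNN : NN = ∏ γ, p γ ^ m γ) :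
    digN p m (x % NN) β t = digN p m x β t := by
  rw [digN_flat p m _ β t (hp β) ht1 htm, digN_flat p m x β t (hp β) ht1 htm]
  exact digit_congr (by rw [hNN]; exact WW_dvd_N p m β ht1 htm) (Nat.mod_mod_of_dvd x dvd_rfl)

lemma EE_finset_sum {ι : Type*} (q : ℕ) (s : Finset ι) (F : ι → ℤ) :
    EE q (∑ a ∈ s, F a) = ∏ a ∈ s, EE q (F a) := by
  classical
  induction s using Finset.induction_on with
  | empty => simp [EE]
  | insert _ _ hni ih =>
      rw [Finset.sum_insert hni, Finset.prod_insert hni, EE_add, ih]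


lemma step5 {k : ℕ} (hk : 1 ≤ k) (p m : Fin k → ℕ) (q lam τ : ℕ)
    (hp : ∀ α, (p α).Prime) (hq : q.Prime) (hdistq : ∀ α, p α ≠ q)
    (hm : ∀ α, 1 ≤ m α) (hlam : 0 < lam) (hpl : ∀ α, p α ∣ lam)
    (π : Fin k → Equiv.Perm ℕ)
    (hπ : ∀ α, ∀ i ∈ Finset.Icc 1 (m α), (π α) i ∈ Finset.Icc 1 (m α))
    (gv : Fin k → ℕ → ℕ) (g0v : Fin k → ℕ) (gq1v gq0v : ℕ)
    (N : ℕ) (hNdef : N = ∏ α, p α ^ m α)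
    (L : ℕ) (hLdef : L = q * N)
    (hτ0 : 0 < τ) (hτL : τ < L) (hτS : q ∣ τ)
    (QF : Fin k → ℕ → ℕ)
    (hQF : QF = fun α x => ∑ s ∈ Finset.Ico 1 (m α),
      digN p m x α (π α s) * digN p m x α (π α (s+1)))
    (LF : Fin k → ℕ → ℕ)
    (hLF : LF = fun α x => ∑ s ∈ Finset.Icc 1 (m α), gv α s * digN p m x α s)
    (Anat : ℕ → ℕ)
    (hAnat : Anat = fun i =>
      (∑ α, (lam / p α * QF α (i % N) + LF α (i % N) + g0v α)) + gq1v * (i / N) + gq0v)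
    (S : Finset ℕ)
    (hS : S = (Finset.range (L - τ)).filter
      (fun i => ∀ α, digN p m (i % N) α (π α 1) = digN p m ((i+τ) % N) α (π α 1))) :
    (∑ i ∈ S, EE lam ((Anat i : ℤ) - (Anat (i+τ) : ℤ))) = 0 := by
  classical
  have hppos : ∀ α, 0 < p α := fun α => (hp α).pos
  have hN0 : 0 < N := by rw [hNdef]; exact Finset.prod_pos (fun α _ => pow_pos (hppos α) _)
  have hq0 : 0 < q := hq.pos
  -- τ is not a multiple of N
  have hcop : Nat.Coprime q N := by
    rw [hNdef]
    exact Nat.Coprime.prod_right (fun α _ =>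
      ((Nat.coprime_primes hq (hp α)).mpr (fun h => (hdistq α) h.symm)).pow_right _)
  have hNd : ¬ (N ∣ τ) := by
    intro hNτ
    have h1 : q * N ∣ τ := Nat.Coprime.mul_dvd_of_dvd_of_dvd hcop hτS hNτ
    have := Nat.le_of_dvd hτ0 h1
    rw [hLdef] at hτL
    omega
  -- membership in S, with digits of the raw numbers
  have hSmem : ∀ i ∈ S, i < L - τ ∧
      ∀ α, digN p m i α (π α 1) = digN p m (i+τ) α (π α 1) := by
    intro i hi
    rw [hS, Finset.mem_filter, Finset.mem_range] at hi
    refine ⟨hi.1, fun α => ?_⟩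
    have hsl := hπ α 1 (Finset.mem_Icc.mpr ⟨le_refl 1, hm α⟩)
    rw [Finset.mem_Icc] at hsl
    have h1 := hi.2 α
    rwa [digN_mod p m hppos i α (π α 1) hsl.1 hsl.2 N hNdef,
      digN_mod p m hppos (i+τ) α (π α 1) hsl.1 hsl.2 N hNdef] at h1
  have hSmem' : ∀ i, i < L - τ →
      (∀ α, digN p m i α (π α 1) = digN p m (i+τ) α (π α 1)) → i ∈ S := by
    intro i h1 h2
    rw [hS, Finset.mem_filter, Finset.mem_range]
    refine ⟨h1, fun α => ?_⟩
    have hsl := hπ α 1 (Finset.mem_Icc.mpr ⟨le_refl 1, hm α⟩)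
    rw [Finset.mem_Icc] at hsl
    rw [digN_mod p m hppos i α (π α 1) hsl.1 hsl.2 N hNdef,
      digN_mod p m hppos (i+τ) α (π α 1) hsl.1 hsl.2 N hNdef]
    exact h2 α
  -- there is a differing digit
  have hdexists : ∀ i ∈ S, ∃ β t, 1 ≤ t ∧ t ≤ m β ∧
      digN p m i β t ≠ digN p m (i+τ) β t := by
    intro i hi
    have hxne : i % N ≠ (i + τ) % N := by
      intro hcon
      apply hNd
      have h1 : i ≡ i + τ [MOD N] := by unfold Nat.ModEq; omega
      have h2 := (Nat.modEq_iff_dvd' (Nat.le_add_right i τ)).mp h1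
      simpa using h2
    obtain ⟨β, t, h1, h2, h3⟩ := digN_exists_ne p m hppos
      (x := i % N) (y := (i+τ) % N)
      (by rw [← hNdef]; exact Nat.mod_lt _ hN0) (by rw [← hNdef]; exact Nat.mod_lt _ hN0) hxne
    refine ⟨β, t, h1, h2, ?_⟩
    rwa [digN_mod p m hppos i β t h1 h2 N hNdef,
      digN_mod p m hppos (i+τ) β t h1 h2 N hNdef] at h3
  -- canonical data
  set dblocks : ℕ → Finset (Fin k) := fun i => Finset.univ.filter
    (fun β => ∃ t, 1 ≤ t ∧ t ≤ m β ∧ digN p m i β t ≠ digN p m (i+τ) β t) with hdbl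
  have hdb_mem : ∀ i (β : Fin k), β ∈ dblocks i ↔
      ∃ t, 1 ≤ t ∧ t ≤ m β ∧ digN p m i β t ≠ digN p m (i+τ) β t := by
    intro i β
    rw [hdbl]
    simp only [Finset.mem_filter, Finset.mem_univ, true_and]
  set A0 : ℕ → Fin k := fun i =>
    if h : (dblocks i).Nonempty then (dblocks i).min' h else ⟨0, hk⟩ with hA0
  have hdb_ne : ∀ i ∈ S, (dblocks i).Nonempty := by
    intro i hi
    obtain ⟨β, t, h1, h2, h3⟩ := hdexists i hi
    exact ⟨β, (hdb_mem i β).mpr ⟨t, h1, h2, h3⟩⟩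
  have hA0_mem : ∀ i ∈ S, A0 i ∈ dblocks i := by
    intro i hi
    rw [hA0]
    simp only [dif_pos (hdb_ne i hi)]
    exact Finset.min'_mem _ _
  have hA0_congr : ∀ i j, dblocks i = dblocks j → A0 i = A0 j := by
    intro i j h
    rw [hA0]
    simp only [h]
  set tset : ℕ → Finset ℕ := fun i => (Finset.Icc 1 (m (A0 i))).filter
    (fun s => digN p m i (A0 i) (π (A0 i) s) ≠ digN p m (i+τ) (A0 i) (π (A0 i) s)) with hts
  have hts_mem : ∀ i s, s ∈ tset i ↔ (1 ≤ s ∧ s ≤ m (A0 i)) ∧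
      digN p m i (A0 i) (π (A0 i) s) ≠ digN p m (i+τ) (A0 i) (π (A0 i) s) := by
    intro i s
    rw [hts]
    simp only [Finset.mem_filter, Finset.mem_Icc]
  set T0 : ℕ → ℕ := fun i => if h : (tset i).Nonempty then (tset i).min' h else 0 with hT0
  have hsurjπ : ∀ α, ∀ u, 1 ≤ u → u ≤ m α → ∃ s, 1 ≤ s ∧ s ≤ m α ∧ π α s = u := by
    intro α u hu1 hu2
    have himg : (Finset.Icc 1 (m α)).image (π α) = Finset.Icc 1 (m α) := by
      apply Finset.eq_of_subset_of_card_le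
      · intro x hx
        obtain ⟨s, hs, rfl⟩ := Finset.mem_image.mp hx
        exact hπ α s hs
      · rw [Finset.card_image_of_injective _ (Equiv.injective (π α))]
    have hu : u ∈ (Finset.Icc 1 (m α)).image (π α) := by
      rw [himg, Finset.mem_Icc]; exact ⟨hu1, hu2⟩
    obtain ⟨s, hs, hsu⟩ := Finset.mem_image.mp hu
    rw [Finset.mem_Icc] at hs
    exact ⟨s, hs.1, hs.2, hsu⟩
  have hts_ne : ∀ i ∈ S, (tset i).Nonempty := by
    intro i hi
    obtain ⟨t, h1, h2, h3⟩ := (hdb_mem i (A0 i)).mp (hA0_mem i hi)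
    obtain ⟨s, hs1, hs2, hsu⟩ := hsurjπ (A0 i) t h1 h2
    exact ⟨s, (hts_mem i s).mpr ⟨⟨hs1, hs2⟩, by rw [hsu]; exact h3⟩⟩
  have hT0_mem : ∀ i ∈ S, T0 i ∈ tset i := by
    intro i hi
    rw [hT0]
    simp only [dif_pos (hts_ne i hi)]
    exact Finset.min'_mem _ _
  have hT0_min : ∀ i ∈ S, ∀ s ∈ tset i, T0 i ≤ s := by
    intro i hi s hs
    rw [hT0]
    simp only [dif_pos (hts_ne i hi)]
    exact Finset.min'_le _ _ hs
  have hT0_congr : ∀ i j, tset i = tset j → T0 i = T0 j := by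
    intro i j h
    rw [hT0]
    simp only [h]
  have hT0Icc : ∀ i ∈ S, 1 ≤ T0 i ∧ T0 i ≤ m (A0 i) := by
    intro i hi
    exact ((hts_mem i (T0 i)).mp (hT0_mem i hi)).1
  have hT0diff : ∀ i ∈ S,
      digN p m i (A0 i) (π (A0 i) (T0 i)) ≠ digN p m (i+τ) (A0 i) (π (A0 i) (T0 i)) := by
    intro i hi
    exact ((hts_mem i (T0 i)).mp (hT0_mem i hi)).2
  have hT0ge2 : ∀ i ∈ S, 2 ≤ T0 i := by
    intro i hi
    rcases hT0Icc i hi with ⟨h1, h2⟩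
    by_contra hcon
    have h1' : T0 i = 1 := by omega
    have := hT0diff i hi
    rw [h1'] at this
    exact this ((hSmem i hi).2 (A0 i))
  have hagree : ∀ i ∈ S, ∀ s, 1 ≤ s → s < T0 i →
      digN p m i (A0 i) (π (A0 i) s) = digN p m (i+τ) (A0 i) (π (A0 i) s) := by
    intro i hi s hs1 hs2
    by_contra hcon
    have hsm : s ≤ m (A0 i) := by
      have := (hT0Icc i hi).2
      omega
    have hmem : s ∈ tset i := (hts_mem i s).mpr ⟨⟨hs1, hsm⟩, hcon⟩
    have := hT0_min i hi s hmem
    omega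
  set CC : ℕ → ℕ := fun i => π (A0 i) (T0 i - 1) with hCC
  set WF : ℕ → ℕ := fun i => PP p m (A0 i) * p (A0 i) ^ (CC i - 1) with hWF
  set dg : ℕ → ℕ := fun i => i / WF i % p (A0 i) with hdg
  set base : ℕ → ℕ := fun i => i - dg i * WF i with hbase
  have hCCIcc : ∀ i ∈ S, 1 ≤ CC i ∧ CC i ≤ m (A0 i) := by
    intro i hi
    have h2 := hT0ge2 i hi
    have hmm := (hT0Icc i hi).2
    have := hπ (A0 i) (T0 i - 1) (Finset.mem_Icc.mpr ⟨by omega, by omega⟩)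
    rw [Finset.mem_Icc] at this
    rw [hCC]
    exact this
  have hPPpos : ∀ α, 0 < PP p m α := by
    intro α
    rw [PP]
    exact Finset.prod_pos (fun β _ => pow_pos (hppos β) _)
  have hWpos : ∀ i, 0 < WF i := by
    intro i
    rw [hWF]
    exact Nat.mul_pos (hPPpos (A0 i)) (pow_pos (hppos (A0 i)) _)
  have hdg_lt : ∀ i, dg i < p (A0 i) := by
    intro i
    rw [hdg]
    exact Nat.mod_lt _ (hppos (A0 i))
  have hdg_eq : ∀ i ∈ S, digN p m i (A0 i) (CC i) = dg i := by
    intro i hi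
    rcases hCCIcc i hi with ⟨h1, h2⟩
    rw [hdg, hWF]
    exact digN_flat p m i (A0 i) (CC i) (hppos _) h1 h2
  have hdgτ_eq : ∀ i ∈ S, digN p m (i+τ) (A0 i) (CC i) = dg i := by
    intro i hi
    have h2 := hT0ge2 i hi
    have hag := hagree i hi (T0 i - 1) (by omega) (by omega)
    have hCCi : CC i = π (A0 i) (T0 i - 1) := by rw [hCC]
    rw [← hCCi] at hag
    rw [← hag]
    exact hdg_eq i hi
  have hbase_prop : ∀ i, base i / WF i % p (A0 i) = 0 ∧ base i + dg i * WF i = i := by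
    intro i
    rw [hbase, hdg]
    exact base_digit' i (WF i) (p (A0 i)) (hWpos i)
    -- ### key replacement lemma
  have hkey : ∀ i ∈ S, ∀ d, d < p (A0 i) →
      (base i + d * WF i) ∈ S
      ∧ A0 (base i + d * WF i) = A0 i
      ∧ WF (base i + d * WF i) = WF i
      ∧ dg (base i + d * WF i) = d
      ∧ ((Anat (base i + d * WF i) : ℤ) - (Anat (base i + d * WF i + τ) : ℤ)
          = ((Anat i : ℤ) - (Anat (i + τ) : ℤ))
            + ((lam / p (A0 i) : ℕ) : ℤ) * ((d : ℤ) - (dg i : ℤ))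
              * ((digN p m i (A0 i) (π (A0 i) (T0 i)) : ℤ)
                  - (digN p m (i+τ) (A0 i) (π (A0 i) (T0 i)) : ℤ))) := by
    intro i hi d hd
    obtain ⟨hz0, hiz⟩ := hbase_prop i
    rcases hCCIcc i hi with ⟨hc1, hcm⟩
    have hWieq : WF i = PP p m (A0 i) * p (A0 i) ^ (CC i - 1) := by rw [hWF]
    have hWN : WF i * p (A0 i) ∣ N := by
      rw [hWieq, hNdef]
      exact WW_dvd_N p m (A0 i) hc1 hcm
    have hWL : WF i * p (A0 i) ∣ L := by
      rw [hLdef]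
      exact dvd_trans hWN (dvd_mul_left N q)
    have hiLτ : i < L - τ := (hSmem i hi).1
    set y := base i + d * WF i with hy
    have hflat_i : ∀ (w : ℕ), digN p m w (A0 i) (CC i) = w / WF i % p (A0 i) := by
      intro w
      rw [hWieq]
      exact digN_flat p m w (A0 i) (CC i) (hppos _) hc1 hcm
    have hzτ0 : (base i + τ) / WF i % p (A0 i) = 0 := by
      apply digit_force (hWpos i) (hppos (A0 i)) (hdg_lt i)
      have he1 : base i + τ + dg i * WF i = i + τ := by omega
      rw [he1, ← hflat_i (i+τ)]
      exact hdgτ_eq i hi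
    have hyc : y / WF i % p (A0 i) = d := (repl_core (hWpos i) (hppos _) hz0 hd).2.1
    have hyτc : (y + τ) / WF i % p (A0 i) = d := by
      have he : y + τ = (base i + τ) + d * WF i := by rw [hy]; ring
      rw [he]
      exact (repl_core (hWpos i) (hppos _) hzτ0 hd).2.1
    have hother : ∀ (β : Fin k) (t : ℕ), 1 ≤ t → t ≤ m β → ¬(β = A0 i ∧ t = CC i) →
        digN p m y β t = digN p m i β t
        ∧ digN p m (y + τ) β t = digN p m (i + τ) β t := by
      intro β t ht1 htm hne
      have hcmp := WW_cmp p m (α := A0 i) (β := β) (t := CC i) (s := t) hc1 hcm ht1 htm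
        (by rintro ⟨e1, e2⟩; exact hne ⟨e1.symm, e2.symm⟩)
      have hstep : ∀ u dd, u / WF i % p (A0 i) = 0 → dd < p (A0 i) →
          (u + dd * WF i) / (PP p m β * p β ^ (t-1)) % p β
            = u / (PP p m β * p β ^ (t-1)) % p β := by
        intro u dd hu hdd
        rcases hcmp with hcase | hcase
        · rw [← hWieq] at hcase
          rw [repl_above (hWpos i) (hppos _) hu hdd hcase]
        · rw [← hWieq] at hcase
          exact repl_below hcase
      have hflatβ : ∀ w, digN p m w β t = w / (PP p m β * p β ^ (t-1)) % p β :=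
        fun w => digN_flat p m w β t (hppos _) ht1 htm
      constructor
      · have e1 : y / (PP p m β * p β ^ (t-1)) % p β
            = base i / (PP p m β * p β ^ (t-1)) % p β := hstep _ _ hz0 hd
        have e2 : (base i + dg i * WF i) / (PP p m β * p β ^ (t-1)) % p β
            = base i / (PP p m β * p β ^ (t-1)) % p β := hstep _ _ hz0 (hdg_lt i)
        rw [hiz] at e2
        rw [hflatβ, hflatβ, e1, e2]
      · have e1 : ((base i + τ) + d * WF i) / (PP p m β * p β ^ (t-1)) % p β
            = (base i + τ) / (PP p m β * p β ^ (t-1)) % p β := hstep _ _ hzτ0 hd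
        have e2 : ((base i + τ) + dg i * WF i) / (PP p m β * p β ^ (t-1)) % p β
            = (base i + τ) / (PP p m β * p β ^ (t-1)) % p β := hstep _ _ hzτ0 (hdg_lt i)
        have e3 : base i + τ + dg i * WF i = i + τ := by omega
        rw [e3] at e2
        have e4 : y + τ = (base i + τ) + d * WF i := by rw [hy]; ring
        rw [hflatβ, hflatβ, e4, e1, e2]
    have hqpart1 : y / N = i / N := by
      have h1 : y / N = base i / N := repl_above (hWpos i) (hppos _) hz0 hd hWN
      have h2 : (base i + dg i * WF i) / N = base i / N :=
        repl_above (hWpos i) (hppos _) hz0 (hdg_lt i) hWN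
      rw [hiz] at h2
      rw [h1, h2]
    have hqpart2 : (y + τ) / N = (i + τ) / N := by
      have h1 : ((base i + τ) + d * WF i) / N = (base i + τ) / N :=
        repl_above (hWpos i) (hppos _) hzτ0 hd hWN
      have h2 : ((base i + τ) + dg i * WF i) / N = (base i + τ) / N :=
        repl_above (hWpos i) (hppos _) hzτ0 (hdg_lt i) hWN
      have e3 : base i + τ + dg i * WF i = i + τ := by omega
      rw [e3] at h2
      have e4 : y + τ = (base i + τ) + d * WF i := by rw [hy]; ring
      rw [e4, h1, h2]
    have hyL : y + τ < L := by
      have h1 : (base i + τ) + d * WF i < L :=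
        repl_lt (hWpos i) (hppos _) hzτ0 hd hWL (by omega)
      omega
    have hyS : y ∈ S := by
      apply hSmem'
      · omega
      · intro β
        have hsl := hπ β 1 (Finset.mem_Icc.mpr ⟨le_refl 1, hm β⟩)
        rw [Finset.mem_Icc] at hsl
        by_cases hcase : β = A0 i ∧ π β 1 = CC i
        · obtain ⟨hb, hpc⟩ := hcase
          subst hb
          rw [hpc, hflat_i, hflat_i, hyc, hyτc]
        · obtain ⟨e1, e2⟩ := hother β (π β 1) hsl.1 hsl.2 (by tauto)
          rw [e1, e2]
          exact (hSmem i hi).2 β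
    have hyi_c : digN p m y (A0 i) (CC i) = d := by rw [hflat_i]; exact hyc
    have hyτi_c : digN p m (y + τ) (A0 i) (CC i) = d := by rw [hflat_i]; exact hyτc
    have hdiff_iff : ∀ (β : Fin k) (t : ℕ), 1 ≤ t → t ≤ m β →
        ((digN p m y β t ≠ digN p m (y + τ) β t)
          ↔ (digN p m i β t ≠ digN p m (i+τ) β t)) := by
      intro β t ht1 htm
      by_cases hcase : β = A0 i ∧ t = CC i
      · obtain ⟨hb, ht⟩ := hcase
        subst hb; subst ht
        rw [hyi_c, hyτi_c, hdg_eq i hi, hdgτ_eq i hi]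
        simp
      · obtain ⟨e1, e2⟩ := hother β t ht1 htm hcase
        rw [e1, e2]
    have hdb_eq : dblocks y = dblocks i := by
      apply Finset.ext
      intro β
      rw [hdb_mem, hdb_mem]
      constructor
      · rintro ⟨t, h1, h2, h3⟩
        exact ⟨t, h1, h2, (hdiff_iff β t h1 h2).mp h3⟩
      · rintro ⟨t, h1, h2, h3⟩
        exact ⟨t, h1, h2, (hdiff_iff β t h1 h2).mpr h3⟩
    have hA0_eq : A0 y = A0 i := hA0_congr _ _ hdb_eq
    have hts_eq : tset y = tset i := by
      apply Finset.ext
      intro s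
      rw [hts_mem, hts_mem, hA0_eq]
      constructor
      · rintro ⟨⟨h1, h2⟩, h3⟩
        have hsl := hπ (A0 i) s (Finset.mem_Icc.mpr ⟨h1, h2⟩)
        rw [Finset.mem_Icc] at hsl
        exact ⟨⟨h1, h2⟩, (hdiff_iff (A0 i) (π (A0 i) s) hsl.1 hsl.2).mp h3⟩
      · rintro ⟨⟨h1, h2⟩, h3⟩
        have hsl := hπ (A0 i) s (Finset.mem_Icc.mpr ⟨h1, h2⟩)
        rw [Finset.mem_Icc] at hsl
        exact ⟨⟨h1, h2⟩, (hdiff_iff (A0 i) (π (A0 i) s) hsl.1 hsl.2).mpr h3⟩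
    have hT0_eq : T0 y = T0 i := hT0_congr _ _ hts_eq
    have hCC_eq : CC y = CC i := by simp only [hCC, hA0_eq, hT0_eq]
    have hWF_eq : WF y = WF i := by simp only [hWF, hA0_eq, hCC_eq]
    have hdg_y : dg y = d := by
      simp only [hdg, hWF_eq, hA0_eq]
      exact hyc
    refine ⟨hyS, hA0_eq, hWF_eq, hdg_y, ?_⟩
    have hQFmod : ∀ (β : Fin k) (x : ℕ), QF β (x % N) =
        ∑ s ∈ Finset.Ico 1 (m β), digN p m x β (π β s) * digN p m x β (π β (s+1)) := by
      intro β x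
      rw [hQF]
      refine Finset.sum_congr rfl ?_
      intro s hs
      rw [Finset.mem_Ico] at hs
      have hsl1 := hπ β s (Finset.mem_Icc.mpr ⟨hs.1, by omega⟩)
      have hsl2 := hπ β (s+1) (Finset.mem_Icc.mpr ⟨by omega, by omega⟩)
      rw [Finset.mem_Icc] at hsl1 hsl2
      rw [digN_mod p m hppos x β (π β s) hsl1.1 hsl1.2 N hNdef,
        digN_mod p m hppos x β (π β (s+1)) hsl2.1 hsl2.2 N hNdef]
    have hLFmod : ∀ (β : Fin k) (x : ℕ), LF β (x % N) =
        ∑ s ∈ Finset.Icc 1 (m β), gv β s * digN p m x β s := by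
      intro β x
      rw [hLF]
      refine Finset.sum_congr rfl ?_
      intro s hs
      rw [Finset.mem_Icc] at hs
      rw [digN_mod p m hppos x β s hs.1 hs.2 N hNdef]
    have hAcast : ∀ x : ℕ, (Anat x : ℤ) =
        (∑ β, (((lam / p β : ℕ) : ℤ) * (QF β (x % N) : ℤ) + (LF β (x % N) : ℤ) + (g0v β : ℤ)))
          + (gq1v : ℤ) * ((x / N : ℕ) : ℤ) + (gq0v : ℤ) := by
      intro x
      simp only [hAnat]
      push_cast
      ring
    have hQF_other : ∀ β : Fin k, β ≠ A0 i →
        QF β (y % N) = QF β (i % N) ∧ QF β ((y+τ) % N) = QF β ((i+τ) % N) := by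
      intro β hβ
      constructor
      · rw [hQFmod, hQFmod]
        refine Finset.sum_congr rfl ?_
        intro s hs
        rw [Finset.mem_Ico] at hs
        have hsl1 := hπ β s (Finset.mem_Icc.mpr ⟨hs.1, by omega⟩)
        have hsl2 := hπ β (s+1) (Finset.mem_Icc.mpr ⟨by omega, by omega⟩)
        rw [Finset.mem_Icc] at hsl1 hsl2
        rw [(hother β (π β s) hsl1.1 hsl1.2 (by tauto)).1,
          (hother β (π β (s+1)) hsl2.1 hsl2.2 (by tauto)).1]
      · rw [hQFmod, hQFmod]
        refine Finset.sum_congr rfl ?_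
        intro s hs
        rw [Finset.mem_Ico] at hs
        have hsl1 := hπ β s (Finset.mem_Icc.mpr ⟨hs.1, by omega⟩)
        have hsl2 := hπ β (s+1) (Finset.mem_Icc.mpr ⟨by omega, by omega⟩)
        rw [Finset.mem_Icc] at hsl1 hsl2
        rw [(hother β (π β s) hsl1.1 hsl1.2 (by tauto)).2,
          (hother β (π β (s+1)) hsl2.1 hsl2.2 (by tauto)).2]
    have hLF_other : ∀ β : Fin k, β ≠ A0 i →
        LF β (y % N) = LF β (i % N) ∧ LF β ((y+τ) % N) = LF β ((i+τ) % N) := by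
      intro β hβ
      constructor
      · rw [hLFmod, hLFmod]
        refine Finset.sum_congr rfl ?_
        intro s hs
        rw [Finset.mem_Icc] at hs
        rw [(hother β s hs.1 hs.2 (by tauto)).1]
      · rw [hLFmod, hLFmod]
        refine Finset.sum_congr rfl ?_
        intro s hs
        rw [Finset.mem_Icc] at hs
        rw [(hother β s hs.1 hs.2 (by tauto)).2]
    have heqd : (digN p m y (A0 i) (CC i) : ℤ) = (d : ℤ) := by exact_mod_cast hyi_c
    have heqdτ : (digN p m (y+τ) (A0 i) (CC i) : ℤ) = (d : ℤ) := by exact_mod_cast hyτi_c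
    have heqdg : (digN p m i (A0 i) (CC i) : ℤ) = (dg i : ℤ) := by
      exact_mod_cast hdg_eq i hi
    have heqdgτ : (digN p m (i+τ) (A0 i) (CC i) : ℤ) = (dg i : ℤ) := by
      exact_mod_cast hdgτ_eq i hi
    have hLF_main : ((LF (A0 i) (y % N) : ℤ) - (LF (A0 i) (i % N) : ℤ))
        = (gv (A0 i) (CC i) : ℤ) * ((d : ℤ) - (dg i : ℤ)) := by
      have hlin := lin_sum_diff (m (A0 i)) (CC i) (Finset.mem_Icc.mpr ⟨hc1, hcm⟩)
        (fun s => (gv (A0 i) s : ℤ))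
        (fun s => (digN p m y (A0 i) s : ℤ))
        (fun s => (digN p m i (A0 i) s : ℤ))
        (fun s h1 h2 hne => congrArg (fun n : ℕ => (n : ℤ)) (hother (A0 i) s h1 h2 (by tauto)).1)
      rw [hLFmod, hLFmod]
      push_cast
      simpa [heqd, heqdg] using hlin
    have hLF_mainτ : ((LF (A0 i) ((y+τ) % N) : ℤ) - (LF (A0 i) ((i+τ) % N) : ℤ))
        = (gv (A0 i) (CC i) : ℤ) * ((d : ℤ) - (dg i : ℤ)) := by
      have hlin := lin_sum_diff (m (A0 i)) (CC i) (Finset.mem_Icc.mpr ⟨hc1, hcm⟩)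
        (fun s => (gv (A0 i) s : ℤ))
        (fun s => (digN p m (y+τ) (A0 i) s : ℤ))
        (fun s => (digN p m (i+τ) (A0 i) s : ℤ))
        (fun s h1 h2 hne => congrArg (fun n : ℕ => (n : ℤ)) (hother (A0 i) s h1 h2 (by tauto)).2)
      rw [hLFmod, hLFmod]
      push_cast
      simpa [heqdτ, heqdgτ] using hlin
    -- quadratic part
    have hs₀1 : 1 ≤ T0 i - 1 := by have := hT0ge2 i hi; omega
    have hs₀2 : T0 i - 1 < m (A0 i) := by
      have h1 := (hT0Icc i hi).2
      have h2 := hT0ge2 i hi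
      omega
    have hπs₀ : π (A0 i) (T0 i - 1) = CC i := by rw [hCC]
    have hT0s : T0 i - 1 + 1 = T0 i := by have := hT0ge2 i hi; omega
    have huvy : ∀ s, 1 ≤ s → s ≤ m (A0 i) → s ≠ T0 i - 1 →
        (digN p m y (A0 i) (π (A0 i) s) : ℤ)
          = (digN p m i (A0 i) (π (A0 i) s) : ℤ) := by
      intro s h1 h2 hne
      have hπne : π (A0 i) s ≠ CC i := by
        rw [← hπs₀]
        exact fun hcon => hne ((π (A0 i)).injective hcon)
      have hsl := hπ (A0 i) s (Finset.mem_Icc.mpr ⟨h1, h2⟩)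
      rw [Finset.mem_Icc] at hsl
      rw [(hother (A0 i) (π (A0 i) s) hsl.1 hsl.2 (by tauto)).1]
    have huvyτ : ∀ s, 1 ≤ s → s ≤ m (A0 i) → s ≠ T0 i - 1 →
        (digN p m (y+τ) (A0 i) (π (A0 i) s) : ℤ)
          = (digN p m (i+τ) (A0 i) (π (A0 i) s) : ℤ) := by
      intro s h1 h2 hne
      have hπne : π (A0 i) s ≠ CC i := by
        rw [← hπs₀]
        exact fun hcon => hne ((π (A0 i)).injective hcon)
      have hsl := hπ (A0 i) s (Finset.mem_Icc.mpr ⟨h1, h2⟩)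
      rw [Finset.mem_Icc] at hsl
      rw [(hother (A0 i) (π (A0 i) s) hsl.1 hsl.2 (by tauto)).2]
    have hquad : (∑ s ∈ Finset.Ico 1 (m (A0 i)),
          (digN p m y (A0 i) (π (A0 i) s) : ℤ) * (digN p m y (A0 i) (π (A0 i) (s+1)) : ℤ))
        - (∑ s ∈ Finset.Ico 1 (m (A0 i)),
          (digN p m i (A0 i) (π (A0 i) s) : ℤ) * (digN p m i (A0 i) (π (A0 i) (s+1)) : ℤ))
        = ((digN p m y (A0 i) (π (A0 i) (T0 i - 1)) : ℤ)
            - (digN p m i (A0 i) (π (A0 i) (T0 i - 1)) : ℤ))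
            * (digN p m i (A0 i) (π (A0 i) (T0 i - 1 + 1)) : ℤ)
          + (if 2 ≤ T0 i - 1 then (digN p m i (A0 i) (π (A0 i) (T0 i - 1 - 1)) : ℤ)
              * ((digN p m y (A0 i) (π (A0 i) (T0 i - 1)) : ℤ)
                  - (digN p m i (A0 i) (π (A0 i) (T0 i - 1)) : ℤ)) else 0) :=
      quad_sum_diff (m (A0 i)) (T0 i - 1) hs₀1 hs₀2 _ _ huvy
    have hquadτ : (∑ s ∈ Finset.Ico 1 (m (A0 i)),
          (digN p m (y+τ) (A0 i) (π (A0 i) s) : ℤ) * (digN p m (y+τ) (A0 i) (π (A0 i) (s+1)) : ℤ))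
        - (∑ s ∈ Finset.Ico 1 (m (A0 i)),
          (digN p m (i+τ) (A0 i) (π (A0 i) s) : ℤ) * (digN p m (i+τ) (A0 i) (π (A0 i) (s+1)) : ℤ))
        = ((digN p m (y+τ) (A0 i) (π (A0 i) (T0 i - 1)) : ℤ)
            - (digN p m (i+τ) (A0 i) (π (A0 i) (T0 i - 1)) : ℤ))
            * (digN p m (i+τ) (A0 i) (π (A0 i) (T0 i - 1 + 1)) : ℤ)
          + (if 2 ≤ T0 i - 1 then (digN p m (i+τ) (A0 i) (π (A0 i) (T0 i - 1 - 1)) : ℤ)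
              * ((digN p m (y+τ) (A0 i) (π (A0 i) (T0 i - 1)) : ℤ)
                  - (digN p m (i+τ) (A0 i) (π (A0 i) (T0 i - 1)) : ℤ)) else 0) :=
      quad_sum_diff (m (A0 i)) (T0 i - 1) hs₀1 hs₀2 _ _ huvyτ
    have hag : 2 ≤ T0 i - 1 → (digN p m i (A0 i) (π (A0 i) (T0 i - 1 - 1)) : ℤ)
        = (digN p m (i+τ) (A0 i) (π (A0 i) (T0 i - 1 - 1)) : ℤ) := by
      intro h2
      have := hagree i hi (T0 i - 1 - 1) (by omega) (by omega)
      exact_mod_cast this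
    have hQF_main : ((QF (A0 i) (y % N) : ℤ) - (QF (A0 i) (i % N) : ℤ))
        - ((QF (A0 i) ((y+τ) % N) : ℤ) - (QF (A0 i) ((i+τ) % N) : ℤ))
        = ((d : ℤ) - (dg i : ℤ)) * ((digN p m i (A0 i) (π (A0 i) (T0 i)) : ℤ)
            - (digN p m (i+τ) (A0 i) (π (A0 i) (T0 i)) : ℤ)) := by
      have e1 : (QF (A0 i) (y % N) : ℤ) - (QF (A0 i) (i % N) : ℤ)
          = (∑ s ∈ Finset.Ico 1 (m (A0 i)),
              (digN p m y (A0 i) (π (A0 i) s) : ℤ) * (digN p m y (A0 i) (π (A0 i) (s+1)) : ℤ))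
            - (∑ s ∈ Finset.Ico 1 (m (A0 i)),
              (digN p m i (A0 i) (π (A0 i) s) : ℤ) * (digN p m i (A0 i) (π (A0 i) (s+1)) : ℤ)) := by
        rw [hQFmod, hQFmod]
        push_cast
        ring
      have e2 : (QF (A0 i) ((y+τ) % N) : ℤ) - (QF (A0 i) ((i+τ) % N) : ℤ)
          = (∑ s ∈ Finset.Ico 1 (m (A0 i)),
              (digN p m (y+τ) (A0 i) (π (A0 i) s) : ℤ) * (digN p m (y+τ) (A0 i) (π (A0 i) (s+1)) : ℤ))
            - (∑ s ∈ Finset.Ico 1 (m (A0 i)),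
              (digN p m (i+τ) (A0 i) (π (A0 i) s) : ℤ) * (digN p m (i+τ) (A0 i) (π (A0 i) (s+1)) : ℤ)) := by
        rw [hQFmod, hQFmod]
        push_cast
        ring
      rw [e1, e2, hquad, hquadτ, hT0s, hπs₀, heqd, heqdτ, heqdg, heqdgτ]
      by_cases h2 : 2 ≤ T0 i - 1
      · rw [if_pos h2, if_pos h2, hag h2]
        ring
      · rw [if_neg h2, if_neg h2]
        ring
    -- assemble
    rw [hAcast y, hAcast (y+τ), hAcast i, hAcast (i+τ), hqpart1, hqpart2]
    have hsum : (∑ β, (((lam / p β : ℕ) : ℤ) * (QF β (y % N) : ℤ) + (LF β (y % N) : ℤ) + (g0v β : ℤ)))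
        - (∑ β, (((lam / p β : ℕ) : ℤ) * (QF β ((y+τ) % N) : ℤ) + (LF β ((y+τ) % N) : ℤ) + (g0v β : ℤ)))
        - ((∑ β, (((lam / p β : ℕ) : ℤ) * (QF β (i % N) : ℤ) + (LF β (i % N) : ℤ) + (g0v β : ℤ)))
          - (∑ β, (((lam / p β : ℕ) : ℤ) * (QF β ((i+τ) % N) : ℤ) + (LF β ((i+τ) % N) : ℤ) + (g0v β : ℤ))))
        = ((lam / p (A0 i) : ℕ) : ℤ) * ((d : ℤ) - (dg i : ℤ))
            * ((digN p m i (A0 i) (π (A0 i) (T0 i)) : ℤ)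
                - (digN p m (i+τ) (A0 i) (π (A0 i) (T0 i)) : ℤ)) := by
      rw [← Finset.sum_sub_distrib, ← Finset.sum_sub_distrib, ← Finset.sum_sub_distrib]
      rw [Finset.sum_eq_single_of_mem (A0 i) (Finset.mem_univ _) ?_]
      · linear_combination ((lam / p (A0 i) : ℕ) : ℤ) * hQF_main + hLF_main - hLF_mainτ
      · intro β _ hβ
        rw [(hQF_other β hβ).1, (hQF_other β hβ).2, (hLF_other β hβ).1, (hLF_other β hβ).2]
        ring
    linarith [hsum]
  
  -- ### sum over fibers of `base`
  rw [← Finset.sum_fiberwise_of_maps_to (g := base) (t := S.image base)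
    (fun i hi => Finset.mem_image_of_mem base hi)
    (fun i => EE lam ((Anat i : ℤ) - (Anat (i+τ) : ℤ)))]
  refine Finset.sum_eq_zero ?_
  intro j hj
  obtain ⟨i, hiS, hji⟩ := Finset.mem_image.mp hj
  have hfib : S.filter (fun x => base x = j)
      = (Finset.range (p (A0 i))).image (fun d => base i + d * WF i) := by
    have h0i := hkey i hiS 0 (hppos (A0 i))
    have hb0i : base i + 0 * WF i = base i := by ring
    rw [hb0i] at h0i
    apply Finset.ext
    intro x
    rw [Finset.mem_filter, Finset.mem_image]
    constructor
    · rintro ⟨hxS, hxb⟩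
      have h0x := hkey x hxS 0 (hppos (A0 x))
      have hb0x : base x + 0 * WF x = base x := by ring
      rw [hb0x] at h0x
      have hbxbi : base x = base i := by rw [hxb, hji]
      have hA0xi : A0 x = A0 i := by
        rw [← h0x.2.1, ← h0i.2.1, hbxbi]
      have hWFxi : WF x = WF i := by
        rw [← h0x.2.2.1, ← h0i.2.2.1, hbxbi]
      refine ⟨dg x, ?_, ?_⟩
      · rw [Finset.mem_range, ← hA0xi]
        exact hdg_lt x
      · rw [← hWFxi, ← hbxbi]
        exact (hbase_prop x).2
    · rintro ⟨d, hd, rfl⟩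
      rw [Finset.mem_range] at hd
      obtain ⟨hyS', hA0', hWF', hdg', -⟩ := hkey i hiS d hd
      refine ⟨hyS', ?_⟩
      have hb1 : base (base i + d * WF i)
          = base i + d * WF i - dg (base i + d * WF i) * WF (base i + d * WF i) := by
        rw [hbase]
      rw [hb1, hdg', hWF', show base i + d * WF i - d * WF i = base i by omega, hji]
  have hinj : ∀ d1 ∈ Finset.range (p (A0 i)), ∀ d2 ∈ Finset.range (p (A0 i)),
      base i + d1 * WF i = base i + d2 * WF i → d1 = d2 := by
    intro d1 _ d2 _ heq
    have h1 : d1 * WF i = d2 * WF i := by omega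
    exact Nat.eq_of_mul_eq_mul_right (hWpos i) h1
  rw [hfib, Finset.sum_image hinj]
  have hform : ∀ d ∈ Finset.range (p (A0 i)),
      EE lam ((Anat (base i + d * WF i) : ℤ) - (Anat (base i + d * WF i + τ) : ℤ))
      = EE lam (((Anat i : ℤ) - (Anat (i+τ) : ℤ))
            - ((lam / p (A0 i) : ℕ) : ℤ) * (dg i : ℤ)
              * ((digN p m i (A0 i) (π (A0 i) (T0 i)) : ℤ)
                  - (digN p m (i+τ) (A0 i) (π (A0 i) (T0 i)) : ℤ)))
          * EE (p (A0 i))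
            (((digN p m i (A0 i) (π (A0 i) (T0 i)) : ℤ)
              - (digN p m (i+τ) (A0 i) (π (A0 i) (T0 i)) : ℤ)) * d) := by
    intro d hd
    rw [Finset.mem_range] at hd
    obtain ⟨-, -, -, -, hD⟩ := hkey i hiS d hd
    rw [hD]
    rw [show ((Anat i : ℤ) - (Anat (i+τ) : ℤ))
          + ((lam / p (A0 i) : ℕ) : ℤ) * ((d : ℤ) - (dg i : ℤ))
            * ((digN p m i (A0 i) (π (A0 i) (T0 i)) : ℤ)
                - (digN p m (i+τ) (A0 i) (π (A0 i) (T0 i)) : ℤ))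
        = (((Anat i : ℤ) - (Anat (i+τ) : ℤ))
            - ((lam / p (A0 i) : ℕ) : ℤ) * (dg i : ℤ)
              * ((digN p m i (A0 i) (π (A0 i) (T0 i)) : ℤ)
                  - (digN p m (i+τ) (A0 i) (π (A0 i) (T0 i)) : ℤ)))
          + ((lam / p (A0 i) : ℕ) : ℤ)
            * (((digN p m i (A0 i) (π (A0 i) (T0 i)) : ℤ)
                - (digN p m (i+τ) (A0 i) (π (A0 i) (T0 i)) : ℤ)) * d) by ring]
    rw [EE_add, EE_div_mul lam (p (A0 i)) (hppos _).ne' (hpl _) hlam.ne']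
  rw [Finset.sum_congr rfl hform, ← Finset.mul_sum]
  have hgeo : ∑ d ∈ Finset.range (p (A0 i)),
      EE (p (A0 i))
        (((digN p m i (A0 i) (π (A0 i) (T0 i)) : ℤ)
          - (digN p m (i+τ) (A0 i) (π (A0 i) (T0 i)) : ℤ)) * d) = 0 := by
    apply EE_geom _ (hppos _)
    intro hdvd
    have h1 : digN p m i (A0 i) (π (A0 i) (T0 i)) < p (A0 i) :=
      digN_lt p m _ _ _ (hppos _)
    have h2 : digN p m (i+τ) (A0 i) (π (A0 i) (T0 i)) < p (A0 i) :=
      digN_lt p m _ _ _ (hppos _)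
    have habs : |(digN p m i (A0 i) (π (A0 i) (T0 i)) : ℤ)
        - (digN p m (i+τ) (A0 i) (π (A0 i) (T0 i)) : ℤ)| < (p (A0 i) : ℤ) := by
      rw [abs_lt]
      constructor
      · have := Int.ofNat_lt.mpr h2
        omega
      · have := Int.ofNat_lt.mpr h1
        omega
    have hz := Int.eq_zero_of_abs_lt_dvd hdvd habs
    apply hT0diff i hiS
    have := sub_eq_zero.mp hz
    exact_mod_cast this
  rw [hgeo, mul_zero]


theorem stmt4 (k lam : ℕ) (hk : 1 ≤ k)
    (p : Fin k → ℕ) (q : ℕ) (m : Fin k → ℕ)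
    (hp : ∀ α, (p α).Prime) (hq : q.Prime)
    (hdist : ∀ α β, α ≠ β → p α ≠ p β) (hdistq : ∀ α, p α ≠ q)
    (hm : ∀ α, 1 ≤ m α)
    (hlam : 0 < lam) (hpl : ∀ α, p α ∣ lam) (hql : q ∣ lam)
    (π : Fin k → Equiv.Perm ℕ)
    (hπ : ∀ α, ∀ i ∈ Finset.Icc 1 (m α), (π α) i ∈ Finset.Icc 1 (m α))
    (g : Fin k → ℕ → ZMod lam) (g₀ : Fin k → ZMod lam)
    (f : (α : Fin k) → (ℕ → ZMod (p α)) → ZMod lam)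
    (hf : ∀ (α : Fin k) (v : ℕ → ZMod (p α)),
      f α v = ((lam / p α : ℕ) : ZMod lam) *
            (∑ i ∈ Finset.Ico 1 (m α),
              ((v ((π α) i)).val : ZMod lam) * ((v ((π α) (i + 1))).val : ZMod lam))
        + ∑ i ∈ Finset.Icc 1 (m α), g α i * ((v i).val : ZMod lam) + g₀ α)
    (a : ((α : Fin k) → ℕ) → ((α : Fin k) → (ℕ → ZMod (p α))) → ZMod lam)
    (ha : ∀ (γ : (α : Fin k) → ℕ) (v : (α : Fin k) → (ℕ → ZMod (p α))),
      a γ v = (∑ α, f α (v α))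
        + ∑ α, ((lam / p α : ℕ) : ZMod lam) *
            ((v α ((π α) 1)).val : ZMod lam) * ((γ α : ℕ) : ZMod lam))
    (gq1 gq0 : ZMod lam)
    (b : ((α : Fin k) → ℕ) → ((α : Fin k) → (ℕ → ZMod (p α))) → ZMod q → ZMod lam)
    (hb : ∀ (γ : (α : Fin k) → ℕ) (v : (α : Fin k) → (ℕ → ZMod (p α))) (w : ZMod q),
      b γ v w = a γ v + gq1 * (w.val : ZMod lam) + gq0)
    (τ : ℕ) (hτ0 : 0 < τ) (hτL : τ < q * ∏ α, p α ^ m α) (hτS : q ∣ τ) :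
    ∑ γ ∈ Fintype.piFinset (fun α => Finset.range (p α)),
      aacf (q * ∏ α, p α ^ m α)
        (fun i => eZMod lam
          (b γ (digv p m (i % ∏ α, p α ^ m α))
            ((i / ∏ α, p α ^ m α : ℕ) : ZMod q)))
        τ = 0 := by
  classical
  set N := ∏ α, p α ^ m α with hNdef
  have hppos : ∀ α, 0 < p α := fun α => (hp α).pos
  have hN0 : 0 < N := Finset.prod_pos (fun α _ => pow_pos (hppos α) _)
  have hq0 : 0 < q := hq.pos
  have hlam' : lam ≠ 0 := hlam.ne'
  haveI : NeZero lam := ⟨hlam'⟩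
  set L := q * N with hLdef
  -- natural-number exponent pieces
  set QF : Fin k → ℕ → ℕ := fun α x =>
    ∑ s ∈ Finset.Ico 1 (m α), digN p m x α (π α s) * digN p m x α (π α (s+1)) with hQF
  set LF : Fin k → ℕ → ℕ := fun α x =>
    ∑ s ∈ Finset.Icc 1 (m α), (g α s).val * digN p m x α s with hLF
  set Anat : ℕ → ℕ := fun i =>
    (∑ α, ((lam / p α) * QF α (i % N) + LF α (i % N) + (g₀ α).val))
      + gq1.val * (i / N) + gq0.val with hAnat
  set cc : Fin k → ℕ → ℕ := fun α i => (lam / p α) * digN p m (i % N) α (π α 1) with hcc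
  -- b as a natural number cast
  have hbv : ∀ (i : ℕ) (γ : (α : Fin k) → ℕ), i < L →
      b γ (digv p m (i % N)) ((i / N : ℕ) : ZMod q)
        = ((Anat i + ∑ α, cc α i * γ α : ℕ) : ZMod lam) := by
    intro i γ hi
    have hw : (((i / N : ℕ) : ZMod q)).val = i / N :=
      ZMod.val_natCast_of_lt (Nat.div_lt_of_lt_mul (by rw [mul_comm]; exact hi))
    have hdv : ∀ (α : Fin k) (t : ℕ),
        (digv p m (i % N) α t).val = digN p m (i % N) α t :=
      fun α t => digv_val p m _ α t (hppos α)
    rw [hb, ha]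
    simp only [hf, hdv, hw, hAnat, hcc, hQF, hLF]
    push_cast [ZMod.natCast_val, ZMod.cast_id]
    ring
  -- rewrite each aacf term via EE
  have hterm : ∀ γ ∈ Fintype.piFinset (fun α => Finset.range (p α)),
      aacf L (fun i => eZMod lam
          (b γ (digv p m (i % N)) ((i / N : ℕ) : ZMod q))) τ
        = ∑ i ∈ Finset.range (L - τ),
            EE lam (((Anat i + ∑ α, cc α i * γ α : ℕ) : ℤ)
              - ((Anat (i+τ) + ∑ α, cc α (i+τ) * γ α : ℕ) : ℤ)) := by
    intro γ _
    rw [aacf]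
    refine Finset.sum_congr rfl ?_
    intro i hi
    rw [Finset.mem_range] at hi
    have hiL : i < L := by omega
    have hjL : i + τ < L := by omega
    rw [hbv i γ hiL, hbv (i+τ) γ hjL, EE_natCast lam hlam', EE_natCast lam hlam',
      EE_conj, ← EE_add]
    ring_nf
  rw [Finset.sum_congr rfl hterm, Finset.sum_comm]
  -- inner γ-sum
  have hgamma : ∀ i ∈ Finset.range (L - τ),
      ∑ γ ∈ Fintype.piFinset (fun α => Finset.range (p α)),
        EE lam (((Anat i + ∑ α, cc α i * γ α : ℕ) : ℤ)
          - ((Anat (i+τ) + ∑ α, cc α (i+τ) * γ α : ℕ) : ℤ))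
      = (EE lam ((Anat i : ℤ) - (Anat (i+τ) : ℤ))) *
          (if (∀ α, digN p m (i % N) α (π α 1) = digN p m ((i+τ) % N) α (π α 1))
            then (∏ α, (p α : ℂ)) else 0) := by
    intro i _
    have hsplit : ∀ γ : (α : Fin k) → ℕ,
        (((Anat i + ∑ α, cc α i * γ α : ℕ) : ℤ)
          - ((Anat (i+τ) + ∑ α, cc α (i+τ) * γ α : ℕ) : ℤ))
        = ((Anat i : ℤ) - (Anat (i+τ) : ℤ))
          + ∑ α, (((lam / p α : ℕ) : ℤ) *
              ((digN p m (i % N) α (π α 1) : ℤ) - (digN p m ((i+τ) % N) α (π α 1) : ℤ)))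
              * ((γ α : ℕ) : ℤ) := by
      intro γ
      have key : ∀ x : Fin k, ((cc x i : ℕ) : ℤ) * ((γ x : ℕ) : ℤ) - ((cc x (i+τ) : ℕ) : ℤ) * ((γ x : ℕ) : ℤ)
          = (((lam / p x : ℕ) : ℤ) *
              ((digN p m (i % N) x (π x 1) : ℤ) - (digN p m ((i+τ) % N) x (π x 1) : ℤ)))
              * ((γ x : ℕ) : ℤ) := by
        intro x
        simp only [hcc]
        push_cast
        ring
      have e1 : ((Anat i + ∑ α, cc α i * γ α : ℕ) : ℤ)
          = (Anat i : ℤ) + ∑ α, ((cc α i : ℕ) : ℤ) * ((γ α : ℕ) : ℤ) := by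
        push_cast
        ring
      have e2 : ((Anat (i+τ) + ∑ α, cc α (i+τ) * γ α : ℕ) : ℤ)
          = (Anat (i+τ) : ℤ) + ∑ α, ((cc α (i+τ) : ℕ) : ℤ) * ((γ α : ℕ) : ℤ) := by
        push_cast
        ring
      rw [e1, e2]
      have hS : ∑ α, ((cc α i : ℕ) : ℤ) * ((γ α : ℕ) : ℤ)
            - ∑ α, ((cc α (i+τ) : ℕ) : ℤ) * ((γ α : ℕ) : ℤ)
          = ∑ α, (((lam / p α : ℕ) : ℤ) *
              ((digN p m (i % N) α (π α 1) : ℤ) - (digN p m ((i+τ) % N) α (π α 1) : ℤ)))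
              * ((γ α : ℕ) : ℤ) := by
        rw [← Finset.sum_sub_distrib]
        exact Finset.sum_congr rfl (fun x _ => key x)
      linarith [hS]
    simp only [hsplit, EE_add, EE_finset_sum]
    rw [← Finset.mul_sum,
      ← Finset.prod_univ_sum (fun α : Fin k => Finset.range (p α))
        (fun α d => EE lam ((((lam / p α : ℕ) : ℤ) *
          ((digN p m (i % N) α (π α 1) : ℤ) - (digN p m ((i+τ) % N) α (π α 1) : ℤ)))
          * ((d : ℕ) : ℤ)))]
    congr 1
    have hone : ∀ α : Fin k,
        (∑ d ∈ Finset.range (p α), EE lam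
          ((((lam / p α : ℕ) : ℤ) *
            ((digN p m (i % N) α (π α 1) : ℤ) - (digN p m ((i+τ) % N) α (π α 1) : ℤ)))
            * ((d : ℕ) : ℤ)))
        = if digN p m (i % N) α (π α 1) = digN p m ((i+τ) % N) α (π α 1)
            then (p α : ℂ) else 0 := by
      intro α
      set cd : ℤ := (digN p m (i % N) α (π α 1) : ℤ) - (digN p m ((i+τ) % N) α (π α 1) : ℤ)
        with hcd
      have hstep : ∀ d : ℕ, EE lam ((((lam / p α : ℕ) : ℤ) * cd) * ((d : ℕ) : ℤ))
          = EE (p α) (cd * d) := by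
        intro d
        rw [mul_assoc, EE_div_mul lam (p α) (hppos α).ne' (hpl α) hlam']
      simp only [hstep]
      by_cases hdd : digN p m (i % N) α (π α 1) = digN p m ((i+τ) % N) α (π α 1)
      · have : cd = 0 := by rw [hcd, hdd]; ring
        simp only [this, zero_mul]
        rw [if_pos hdd]
        have : EE (p α) 0 = 1 := by simp [EE]
        rw [Finset.sum_congr rfl (fun d _ => this), Finset.sum_const, Finset.card_range]
        simp
      · rw [if_neg hdd]
        refine EE_geom (p α) (hppos α) cd ?_
        intro hdvd
        have h1 : digN p m (i % N) α (π α 1) < p α := digN_lt p m _ α _ (hppos α)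
        have h2 : digN p m ((i+τ) % N) α (π α 1) < p α := digN_lt p m _ α _ (hppos α)
        have habs : |cd| < (p α : ℤ) := by
          rw [hcd, abs_lt]
          constructor <;> [linarith [Int.ofNat_lt.mpr h2]; linarith [Int.ofNat_lt.mpr h1]]
        have := Int.eq_zero_of_abs_lt_dvd hdvd habs
        apply hdd
        rw [hcd, sub_eq_zero] at this
        exact_mod_cast this
    rw [Finset.prod_congr rfl (fun α _ => hone α)]
    by_cases hall : ∀ α, digN p m (i % N) α (π α 1) = digN p m ((i+τ) % N) α (π α 1)
    · rw [if_pos hall]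
      exact Finset.prod_congr rfl (fun α _ => by rw [if_pos (hall α)])
    · rw [if_neg hall]
      push_neg at hall
      obtain ⟨α₀, hα₀⟩ := hall
      exact Finset.prod_eq_zero (Finset.mem_univ α₀) (by rw [if_neg hα₀])
  rw [Finset.sum_congr rfl hgamma]
  -- collapse to the filtered sum
  set S : Finset ℕ := (Finset.range (L - τ)).filter
    (fun i => ∀ α, digN p m (i % N) α (π α 1) = digN p m ((i+τ) % N) α (π α 1)) with hS
  have hcollapse :
      (∑ i ∈ Finset.range (L - τ),
        (EE lam ((Anat i : ℤ) - (Anat (i+τ) : ℤ))) *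
          (if (∀ α, digN p m (i % N) α (π α 1) = digN p m ((i+τ) % N) α (π α 1))
            then (∏ α, (p α : ℂ)) else 0))
      = (∑ i ∈ S, EE lam ((Anat i : ℤ) - (Anat (i+τ) : ℤ))) * (∏ α, (p α : ℂ)) := by
    rw [Finset.sum_mul, hS, Finset.sum_filter]
    refine Finset.sum_congr rfl ?_
    intro i _
    by_cases h : ∀ α, digN p m (i % N) α (π α 1) = digN p m ((i+τ) % N) α (π α 1)
    · rw [if_pos h, if_pos h]
    · rw [if_neg h, if_neg h, mul_zero]
  rw [hcollapse]
  have hstep5 : (∑ i ∈ S, EE lam ((Anat i : ℤ) - (Anat (i+τ) : ℤ))) = 0 :=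
    step5 hk p m q lam τ hp hq hdistq hm hlam hpl π hπ
      (fun α s => (g α s).val) (fun α => (g₀ α).val) gq1.val gq0.val
      N hNdef L hLdef hτ0 hτL hτS QF hQF LF hLF Anat hAnat S hS
  rw [hstep5, zero_mul]
end

section
/- Let a = (a_0, …, a_{L_1−1}) and b = (b_0, …, b_{L_2−1}) be complex-valued sequences of lengths L_1 and L_2, and let a ⊗ b be their Kronecker product, the sequence of length L_1·L_2 with entries (a ⊗ b)_{i·L_2 + j} = a_i · b_j for 0 ≤ i < L_1 and 0 ≤ j < L_2. Then for every integer τ with 0 ≤ τ < L_1·L_2, ρ(a ⊗ b)(τ) = ρ(a)(⌊τ/L_2⌋) · ρ(b)(τ mod L_2) + Δ · ρ(a)(⌊τ/L_2⌋ + 1) · conj(ρ(b)(L_2 − (τ mod L_2))), where Δ = 0 if L_2 ∣ τ and Δ = 1 otherwise. -/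
open Finset

private lemma sum_range_mul_aux (f : ℕ → ℂ) (M L : ℕ) :
    ∑ t ∈ Finset.range (M * L), f t
      = ∑ i ∈ Finset.range M, ∑ j ∈ Finset.range L, f (i * L + j) := by
  induction M with
  | zero => simp
  | succ n ih =>
      rw [Finset.sum_range_succ, ← ih, Nat.succ_mul, Finset.sum_range_add]

private lemma split_aux (f : ℕ → ℂ) (M s u : ℕ) :
    ∑ t ∈ Finset.range (M * (s + u) + s), f t
      = (∑ i ∈ Finset.range (M + 1), ∑ j ∈ Finset.range s, f (i * (s + u) + j))
        + ∑ i ∈ Finset.range M, ∑ j ∈ Finset.range u, f (i * (s + u) + (s + j)) := by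
  rw [Finset.sum_range_add, sum_range_mul_aux, Finset.sum_range_succ]
  have h : ∀ i, ∑ j ∈ Finset.range (s + u), f (i * (s + u) + j)
      = ∑ j ∈ Finset.range s, f (i * (s + u) + j)
        + ∑ j ∈ Finset.range u, f (i * (s + u) + (s + j)) := by
    intro i
    rw [Finset.sum_range_add]
  simp only [h, Finset.sum_add_distrib]
  ring

theorem stmt5 (L₁ L₂ : ℕ) (hL₁ : 0 < L₁) (hL₂ : 0 < L₂) (a b : ℕ → ℂ)
    (τ : ℕ) (hτ : τ < L₁ * L₂) :
    aacf (L₁ * L₂) (fun t => a (t / L₂) * b (t % L₂)) τ =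
      aacf L₁ a (τ / L₂) * aacf L₂ b (τ % L₂) +
      (if L₂ ∣ τ then 0 else 1) * aacf L₁ a (τ / L₂ + 1) *
        (starRingEnd ℂ) (aacf L₂ b (L₂ - τ % L₂)) := by
  have hdiv : ∀ i j : ℕ, j < L₂ → (i * L₂ + j) / L₂ = i := by
    intro i j hj
    rw [add_comm, Nat.add_mul_div_right _ _ hL₂, Nat.div_eq_of_lt hj, zero_add]
  have hmod : ∀ i j : ℕ, j < L₂ → (i * L₂ + j) % L₂ = j := by
    intro i j hj
    rw [add_comm, Nat.add_mul_mod_self_right, Nat.mod_eq_of_lt hj]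
  set q := τ / L₂ with hq
  set r := τ % L₂ with hr
  have hrL : r < L₂ := Nat.mod_lt _ hL₂
  have hτeq : τ = L₂ * q + r := (Nat.div_add_mod τ L₂).symm
  have hqL : q < L₁ := Nat.div_lt_of_lt_mul (by rw [mul_comm]; exact hτ)
  by_cases hdvd : L₂ ∣ τ
  · -- divisible case : r = 0
    have hr0 : r = 0 := by rw [hr]; exact Nat.mod_eq_zero_of_dvd hdvd
    rw [if_pos hdvd, zero_mul, zero_mul, add_zero]
    have hN : L₁ * L₂ - τ = (L₁ - q) * L₂ := by
      rw [Nat.sub_mul, hτeq, hr0, add_zero, mul_comm L₂ q]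
    unfold aacf
    rw [hN, sum_range_mul_aux, hr0, Nat.sub_zero, Finset.sum_mul_sum]
    refine Finset.sum_congr rfl fun i hi => Finset.sum_congr rfl fun j hj => ?_
    simp only [Finset.mem_range] at hi hj
    have e1 : i * L₂ + j + τ = (i + q) * L₂ + j := by rw [hτeq, hr0]; ring
    simp only [e1, hdiv i j hj, hmod i j hj, hdiv (i + q) j hj, hmod (i + q) j hj,
      map_mul, add_zero]
    ring
  · -- non divisible case : r > 0
    rw [if_neg hdvd, one_mul]
    have hrpos : 0 < r := Nat.pos_of_ne_zero fun h => hdvd (Nat.dvd_of_mod_eq_zero h)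
    obtain ⟨M, hM⟩ : ∃ M, L₁ = M + q + 1 := ⟨L₁ - q - 1, by omega⟩
    have hN : L₁ * L₂ - τ = M * ((L₂ - r) + r) + (L₂ - r) := by
      have e : L₁ * L₂ = M * L₂ + q * L₂ + L₂ := by rw [hM]; ring
      rw [Nat.sub_add_cancel hrL.le, e, hτeq, mul_comm L₂ q]
      generalize M * L₂ = A
      generalize q * L₂ = B
      omega
    unfold aacf
    rw [hN, split_aux]
    simp only [Nat.sub_add_cancel hrL.le]
    have hL1q : L₁ - q = M + 1 := by omega
    have hL1q1 : L₁ - (q + 1) = M := by omega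
    have hL2r : L₂ - (L₂ - r) = r := by omega
    rw [hL1q, hL1q1, hL2r, map_sum, Finset.sum_mul_sum, Finset.sum_mul_sum]
    congr 1
    · refine Finset.sum_congr rfl fun i hi => Finset.sum_congr rfl fun j hj => ?_
      simp only [Finset.mem_range] at hi hj
      have hjL : j < L₂ := by omega
      have hjrL : j + r < L₂ := by omega
      have e1 : i * L₂ + j + τ = (i + q) * L₂ + (j + r) := by rw [hτeq]; ring
      simp only [e1, hdiv i j hjL, hmod i j hjL, hdiv (i + q) (j + r) hjrL,
        hmod (i + q) (j + r) hjrL, map_mul]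
      ring
    · refine Finset.sum_congr rfl fun i hi => Finset.sum_congr rfl fun j hj => ?_
      simp only [Finset.mem_range] at hi hj
      have hjL : (L₂ - r) + j < L₂ := by omega
      have hjL2 : j < L₂ := by omega
      have e2 : i * L₂ + ((L₂ - r) + j) + τ = (i + q + 1) * L₂ + j := by
        rw [hτeq]
        have e : (i + q + 1) * L₂ = i * L₂ + q * L₂ + L₂ := by ring
        rw [e, mul_comm L₂ q]
        generalize i * L₂ = A
        generalize q * L₂ = B
        omega
      simp only [e2, hdiv i ((L₂ - r) + j) hjL, hmod i ((L₂ - r) + j) hjL,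
        hdiv (i + q + 1) j hjL2, hmod (i + q + 1) j hjL2, map_mul,
        RingHomInvPair.comp_apply_eq, starRingEnd_self_apply]
      rw [show j + (L₂ - r) = (L₂ - r) + j from by omega]
      ring
end

section
/- Let {a_0, …, a_{M−1}} be complex-valued sequences of length L with unimodular entries (|a_{i,k}| = 1 for all i, k) forming an (M, L, S)-multiple shift complementary set, i.e. Σ_{i=0}^{M−1} ρ(a_i)(τ) = 0 for every τ with 0 < τ < L and S ∣ τ. Then for every i ∈ {0, …, M−1} and every complex number z with |z| = 1, |Σ_{k=0}^{L−1} a_{i,k} · z^k|² ≤ M·L·S; consequently, the peak-to-mean envelope power ratio of each sequence a_i, namely sup_{|z|=1} |Σ_{k=0}^{L−1} a_{i,k} z^k|² / L, is upper bounded by M·S. -/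
open Finset

private lemma tri (L : ℕ) (c : ℕ → ℕ → ℂ) :
    ∑ k ∈ range L, ∑ l ∈ range L, c k l
      = (∑ k ∈ range L, c k k)
        + (∑ τ ∈ Finset.Ico 1 L, ∑ i ∈ range (L - τ), c i (i + τ))
        + (∑ τ ∈ Finset.Ico 1 L, ∑ i ∈ range (L - τ), c (i + τ) i) := by
  induction L with
  | zero => simp
  | succ L ih =>
    have h1 : ∀ k, ∑ l ∈ range (L+1), c k l = ∑ l ∈ range L, c k l + c k L :=
      fun k => Finset.sum_range_succ _ _
    rw [Finset.sum_range_succ]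
    simp only [h1]
    rw [Finset.sum_add_distrib, ih]
    have hmid : (∑ τ ∈ Finset.Ico 1 (L+1), ∑ i ∈ range (L + 1 - τ), c i (i + τ))
        = (∑ τ ∈ Finset.Ico 1 L, ∑ i ∈ range (L - τ), c i (i + τ))
          + ∑ k ∈ range L, c k L := by
      have e1 : ∀ τ ∈ Finset.Ico 1 (L+1), ∑ i ∈ range (L + 1 - τ), c i (i + τ)
          = (∑ i ∈ range (L - τ), c i (i + τ)) + c (L - τ) L := by
        intro τ hτ
        simp only [mem_Ico] at hτ
        have h2 : L + 1 - τ = (L - τ) + 1 := by omega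
        rw [h2, Finset.sum_range_succ]
        congr 2
        omega
      rw [Finset.sum_congr rfl e1, Finset.sum_add_distrib]
      congr 1
      · rcases Nat.eq_zero_or_pos L with h | h
        · subst h; simp
        · rw [Finset.sum_Ico_succ_top (by omega)]
          simp
      · rw [Finset.sum_Ico_eq_sum_range]
        simp only [Nat.add_sub_cancel]
        have e2 : ∀ j ∈ range L, c (L - (1 + j)) L = c (L - 1 - j) L := by
          intro j _; congr 1; omega
        rw [Finset.sum_congr rfl e2, Finset.sum_range_reflect (fun j => c j L)]
    have hlast : (∑ τ ∈ Finset.Ico 1 (L+1), ∑ i ∈ range (L + 1 - τ), c (i + τ) i)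
        = (∑ τ ∈ Finset.Ico 1 L, ∑ i ∈ range (L - τ), c (i + τ) i)
          + ∑ k ∈ range L, c L k := by
      have e1 : ∀ τ ∈ Finset.Ico 1 (L+1), ∑ i ∈ range (L + 1 - τ), c (i + τ) i
          = (∑ i ∈ range (L - τ), c (i + τ) i) + c L (L - τ) := by
        intro τ hτ
        simp only [mem_Ico] at hτ
        have h2 : L + 1 - τ = (L - τ) + 1 := by omega
        rw [h2, Finset.sum_range_succ]
        congr 2
        omega
      rw [Finset.sum_congr rfl e1, Finset.sum_add_distrib]
      congr 1
      · rcases Nat.eq_zero_or_pos L with h | h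
        · subst h; simp
        · rw [Finset.sum_Ico_succ_top (by omega)]
          simp
      · rw [Finset.sum_Ico_eq_sum_range]
        simp only [Nat.add_sub_cancel]
        have e2 : ∀ j ∈ range L, c L (L - (1 + j)) = c L (L - 1 - j) := by
          intro j _; congr 1; omega
        rw [Finset.sum_congr rfl e2, Finset.sum_range_reflect (fun j => c L j)]
    rw [Finset.sum_range_succ (fun k => c k k), hmid, hlast]
    ring

private lemma expand (L : ℕ) (b : ℕ → ℂ) (hb : ∀ k < L, ‖b k‖ = 1)
    (w : ℂ) (hw : ‖w‖ = 1) :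
    (∑ k ∈ range L, b k * w ^ k) * (starRingEnd ℂ) (∑ k ∈ range L, b k * w ^ k)
      = (L : ℂ) + ∑ τ ∈ Finset.Ico 1 L,
          (aacf L b τ * ((starRingEnd ℂ) w) ^ τ
            + (starRingEnd ℂ) (aacf L b τ) * w ^ τ) := by
  have hw1 : w * (starRingEnd ℂ) w = 1 := by
    rw [Complex.mul_conj]
    norm_cast
    rw [← Complex.sq_norm, hw, one_pow]
  rw [map_sum, Finset.sum_mul_sum]
  have := tri L (fun k l => (b k * w ^ k) * (starRingEnd ℂ) (b l * w ^ l))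
  rw [this]
  have hdiag : ∑ k ∈ range L, (b k * w ^ k) * (starRingEnd ℂ) (b k * w ^ k) = (L : ℂ) := by
    have e : ∑ k ∈ range L, (b k * w ^ k) * (starRingEnd ℂ) (b k * w ^ k)
        = ∑ _k ∈ range L, (1 : ℂ) := by
      refine Finset.sum_congr rfl fun k hk => ?_
      rw [map_mul, map_pow]
      have h1 : b k * (starRingEnd ℂ) (b k) = 1 := by
        rw [Complex.mul_conj]
        norm_cast
        rw [← Complex.sq_norm, hb k (mem_range.mp hk), one_pow]
      calc b k * w ^ k * ((starRingEnd ℂ) (b k) * ((starRingEnd ℂ) w) ^ k)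
          = (b k * (starRingEnd ℂ) (b k)) * (w * (starRingEnd ℂ) w) ^ k := by ring
        _ = 1 := by rw [h1, hw1, one_pow, one_mul]
    rw [e]; simp
  have hmid : ∀ τ ∈ Finset.Ico 1 L,
      ∑ i ∈ range (L - τ), (b i * w ^ i) * (starRingEnd ℂ) (b (i + τ) * w ^ (i + τ))
        = aacf L b τ * ((starRingEnd ℂ) w) ^ τ := by
    intro τ _
    rw [aacf, Finset.sum_mul]
    refine Finset.sum_congr rfl fun i _ => ?_
    rw [map_mul, map_pow]
    calc b i * w ^ i * ((starRingEnd ℂ) (b (i + τ)) * ((starRingEnd ℂ) w) ^ (i + τ))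
        = (b i * (starRingEnd ℂ) (b (i + τ)) * ((starRingEnd ℂ) w) ^ τ)
            * (w * (starRingEnd ℂ) w) ^ i := by rw [pow_add]; ring
      _ = _ := by rw [hw1, one_pow, mul_one]
  have hlast : ∀ τ ∈ Finset.Ico 1 L,
      ∑ i ∈ range (L - τ), (b (i + τ) * w ^ (i + τ)) * (starRingEnd ℂ) (b i * w ^ i)
        = (starRingEnd ℂ) (aacf L b τ) * w ^ τ := by
    intro τ _
    rw [aacf, map_sum, Finset.sum_mul]
    refine Finset.sum_congr rfl fun i _ => ?_
    rw [map_mul, map_mul, map_pow, Complex.conj_conj]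
    calc b (i + τ) * w ^ (i + τ) * ((starRingEnd ℂ) (b i) * ((starRingEnd ℂ) w) ^ i)
        = ((starRingEnd ℂ) (b i) * b (i + τ) * w ^ τ) * (w * (starRingEnd ℂ) w) ^ i := by
          rw [pow_add]; ring
      _ = _ := by rw [hw1, one_pow, mul_one]
  rw [hdiag, Finset.sum_congr rfl hmid, Finset.sum_congr rfl hlast, add_assoc, ← Finset.sum_add_distrib]

set_option maxHeartbeats 1000000 in
theorem stmt6 (M L S : ℕ) (hM : 0 < M) (hL : 0 < L) (hS : 0 < S)
    (a : ℕ → ℕ → ℂ)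
    (hunit : ∀ i < M, ∀ k < L, ‖a i k‖ = 1)
    (hmscs : ∀ τ, 0 < τ → τ < L → S ∣ τ →
      ∑ i ∈ Finset.range M, aacf L (a i) τ = 0) :
    (∀ i < M, ∀ z : ℂ, ‖z‖ = 1 →
      ‖∑ k ∈ Finset.range L, a i k * z ^ k‖ ^ 2 ≤ (M : ℝ) * L * S) ∧
    (∀ i < M,
      sSup {x : ℝ | ∃ z : ℂ, ‖z‖ = 1 ∧
          x = ‖∑ k ∈ Finset.range L, a i k * z ^ k‖ ^ 2 / L}
        ≤ (M : ℝ) * S) := by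
  set ω : ℂ := Complex.exp (2 * Real.pi * Complex.I / S) with hωdef
  have hω : IsPrimitiveRoot ω S := Complex.isPrimitiveRoot_exp S hS.ne'
  have habsω : ‖ω‖ = 1 := by
    rw [hωdef, Complex.norm_exp]
    have h : (2 * (Real.pi : ℂ) * Complex.I / S).re = 0 := by
      simp [Complex.div_re]
    rw [h, Real.exp_zero]
  have hE : ∀ τ : ℕ, (∑ j ∈ range S, (ω ^ τ) ^ j) = if S ∣ τ then (S : ℂ) else 0 := by
    intro τ
    by_cases hd : S ∣ τ
    · rw [if_pos hd, (hω.pow_eq_one_iff_dvd τ).mpr hd]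
      simp
    · rw [if_neg hd, geom_sum_eq (fun h => hd ((hω.pow_eq_one_iff_dvd τ).mp h)) S]
      rw [← pow_mul, mul_comm τ S, pow_mul, hω.pow_eq_one, one_pow, sub_self, zero_div]
  -- main bound
  have key : ∀ i < M, ∀ z : ℂ, ‖z‖ = 1 →
      Complex.normSq (∑ k ∈ Finset.range L, a i k * z ^ k) ≤ (M : ℝ) * L * S := by
    intro i hi z hz
    have hsum : ∑ i' ∈ range M, ∑ j ∈ range S,
        ((∑ k ∈ range L, a i' k * (ω ^ j * z) ^ k)
          * (starRingEnd ℂ) (∑ k ∈ range L, a i' k * (ω ^ j * z) ^ k))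
        = (M : ℂ) * L * S := by
      have hinner : ∀ i' ∈ range M, ∑ j ∈ range S,
          ((∑ k ∈ range L, a i' k * (ω ^ j * z) ^ k)
            * (starRingEnd ℂ) (∑ k ∈ range L, a i' k * (ω ^ j * z) ^ k))
          = (S : ℂ) * L + ∑ τ ∈ Finset.Ico 1 L,
              (aacf L (a i') τ * (starRingEnd ℂ) ((∑ j ∈ range S, (ω ^ τ) ^ j) * z ^ τ)
                + (starRingEnd ℂ) (aacf L (a i') τ) * ((∑ j ∈ range S, (ω ^ τ) ^ j) * z ^ τ)) := by
        intro i' hi'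
        have habsw : ∀ j : ℕ, ‖ω ^ j * z‖ = 1 := by
          intro j; rw [norm_mul, norm_pow, habsω, hz, one_pow, one_mul]
        have e1 : ∀ j ∈ range S,
            ((∑ k ∈ range L, a i' k * (ω ^ j * z) ^ k)
              * (starRingEnd ℂ) (∑ k ∈ range L, a i' k * (ω ^ j * z) ^ k))
            = (L : ℂ) + ∑ τ ∈ Finset.Ico 1 L,
                (aacf L (a i') τ * (starRingEnd ℂ) ((ω ^ τ) ^ j * z ^ τ)
                  + (starRingEnd ℂ) (aacf L (a i') τ) * ((ω ^ τ) ^ j * z ^ τ)) := by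
          intro j _
          rw [expand L (a i') (hunit i' (mem_range.mp hi')) (ω ^ j * z) (habsw j)]
          congr 1
          refine Finset.sum_congr rfl fun τ _ => ?_
          have hpow : (ω ^ j * z) ^ τ = (ω ^ τ) ^ j * z ^ τ := by
            rw [mul_pow, ← pow_mul, ← pow_mul, mul_comm j τ]
          rw [← map_pow, hpow]
        rw [Finset.sum_congr rfl e1, Finset.sum_add_distrib, Finset.sum_const, card_range,
          Finset.sum_comm]
        congr 1
        · rw [nsmul_eq_mul]
        refine Finset.sum_congr rfl fun τ _ => ?_
        rw [Finset.sum_add_distrib, ← Finset.mul_sum, ← Finset.mul_sum, ← map_sum,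
          ← Finset.sum_mul]
      rw [Finset.sum_congr rfl hinner, Finset.sum_add_distrib, Finset.sum_const, card_range,
        Finset.sum_comm]
      have hzero : ∀ τ ∈ Finset.Ico 1 L, ∑ i' ∈ range M,
          (aacf L (a i') τ * (starRingEnd ℂ) ((∑ j ∈ range S, (ω ^ τ) ^ j) * z ^ τ)
            + (starRingEnd ℂ) (aacf L (a i') τ) * ((∑ j ∈ range S, (ω ^ τ) ^ j) * z ^ τ)) = 0 := by
        intro τ hτ
        simp only [mem_Ico] at hτ
        rw [Finset.sum_add_distrib, ← Finset.sum_mul, ← Finset.sum_mul, ← map_sum, hE τ]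
        by_cases hd : S ∣ τ
        · simp [hmscs τ hτ.1 hτ.2 hd]
        · simp [if_neg hd]
      rw [Finset.sum_congr rfl hzero]
      simp only [Finset.sum_const_zero, add_zero, nsmul_eq_mul]
      push_cast
      ring
    -- take real parts
    have hreal : ∑ i' ∈ range M, ∑ j ∈ range S,
        Complex.normSq (∑ k ∈ range L, a i' k * (ω ^ j * z) ^ k) = (M : ℝ) * L * S := by
      have := hsum
      simp only [Complex.mul_conj] at this
      have h2 : ((∑ i' ∈ range M, ∑ j ∈ range S,
          Complex.normSq (∑ k ∈ range L, a i' k * (ω ^ j * z) ^ k) : ℝ) : ℂ)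
          = ((M : ℝ) * L * S : ℝ) := by
        push_cast
        rw [this]
      exact_mod_cast h2
    have hle : Complex.normSq (∑ k ∈ range L, a i k * z ^ k)
        ≤ ∑ i' ∈ range M, ∑ j ∈ range S,
          Complex.normSq (∑ k ∈ range L, a i' k * (ω ^ j * z) ^ k) := by
      have h0 : Complex.normSq (∑ k ∈ range L, a i k * z ^ k)
          = Complex.normSq (∑ k ∈ range L, a i k * (ω ^ 0 * z) ^ k) := by
        simp only [pow_zero, one_mul]
      rw [h0]
      calc Complex.normSq (∑ k ∈ range L, a i k * (ω ^ 0 * z) ^ k)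
          ≤ ∑ j ∈ range S, Complex.normSq (∑ k ∈ range L, a i k * (ω ^ j * z) ^ k) :=
            Finset.single_le_sum
              (f := fun j => Complex.normSq (∑ k ∈ range L, a i k * (ω ^ j * z) ^ k))
              (fun j _ => Complex.normSq_nonneg _) (mem_range.mpr hS)
        _ ≤ _ := Finset.single_le_sum
              (f := fun i' => ∑ j ∈ range S,
                Complex.normSq (∑ k ∈ range L, a i' k * (ω ^ j * z) ^ k))
              (fun i' _ => Finset.sum_nonneg fun j _ => Complex.normSq_nonneg _)
              (mem_range.mpr hi)
    linarith [hreal ▸ hle]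
  constructor
  · intro i hi z hz
    rw [Complex.sq_norm]
    exact key i hi z hz
  · intro i hi
    apply Real.sSup_le
    · rintro x ⟨z, hz, rfl⟩
      rw [div_le_iff₀ (by exact_mod_cast hL)]
      have := key i hi z hz
      rw [Complex.sq_norm]
      calc Complex.normSq (∑ k ∈ range L, a i k * z ^ k) ≤ (M : ℝ) * L * S := this
        _ = (M : ℝ) * S * L := by ring
    · positivity
end

section
/- Let {a_0, …, a_{M−1}} be complex-valued sequences of length L with unimodular entries (|a_{i,k}| = 1 for all i, k) forming an (M, L, S)-multiple shift complementary set, i.e. Σ_{i=0}^{M−1} ρ(a_i)(τ) = 0 for every τ with 0 < τ < L and S ∣ τ. Let ζ = exp(2π√−1/S). Then for every complex number z with |z| = 1, Σ_{i=0}^{M−1} Σ_{u=0}^{S−1} |Σ_{k=0}^{L−1} a_{i,k} · ζ^{k·u} · z^k|² = M·L·S. -/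
open Finset

private lemma geom_aux (S : ℕ) (w : ℂ) (hw : w ^ S = 1) :
    ∑ u ∈ range S, w ^ u = if w = 1 then (S : ℂ) else 0 := by
  split_ifs with h
  · simp [h]
  · rw [geom_sum_eq h, hw]
    simp

private lemma upper_reindex (L : ℕ) (f : ℕ → ℕ → ℂ) :
    ∑ p ∈ (Finset.range L ×ˢ Finset.range L).filter (fun p => p.1 < p.2), f p.1 p.2
    = ∑ τ ∈ Finset.Ico 1 L, ∑ k ∈ Finset.range (L - τ), f k (k + τ) := by
  rw [Finset.sum_sigma']
  refine Finset.sum_nbij' (fun p => ⟨p.2 - p.1, p.1⟩) (fun q => (q.2, q.2 + q.1)) ?_ ?_ ?_ ?_ ?_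
  · rintro ⟨k, l⟩ hp
    simp only [Finset.mem_filter, Finset.mem_product, Finset.mem_range] at hp
    simp only [Finset.mem_sigma, Finset.mem_Ico, Finset.mem_range]
    omega
  · rintro ⟨τ, k⟩ hq
    simp only [Finset.mem_sigma, Finset.mem_Ico, Finset.mem_range] at hq
    simp only [Finset.mem_filter, Finset.mem_product, Finset.mem_range]
    omega
  · rintro ⟨k, l⟩ hp
    simp only [Finset.mem_filter, Finset.mem_product, Finset.mem_range] at hp
    have h1 : k + (l - k) = l := by omega
    simp [h1]
  · rintro ⟨τ, k⟩ hq
    simp only [Finset.mem_sigma, Finset.mem_Ico, Finset.mem_range] at hq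
    have h1 : k + τ - k = τ := by omega
    simp [h1]
  · rintro ⟨k, l⟩ hp
    simp only [Finset.mem_filter, Finset.mem_product, Finset.mem_range] at hp
    simp only []
    congr 1
    omega

private lemma lower_reindex (L : ℕ) (f : ℕ → ℕ → ℂ) :
    ∑ p ∈ (Finset.range L ×ˢ Finset.range L).filter (fun p => p.2 < p.1), f p.1 p.2
    = ∑ τ ∈ Finset.Ico 1 L, ∑ k ∈ Finset.range (L - τ), f (k + τ) k := by
  rw [← upper_reindex L (fun k l => f l k)]
  refine Finset.sum_nbij' (fun p => (p.2, p.1)) (fun p => (p.2, p.1)) ?_ ?_ ?_ ?_ ?_ <;>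
    rintro ⟨k, l⟩ hp <;>
    simp only [Finset.mem_filter, Finset.mem_product, Finset.mem_range] at hp ⊢ <;>
    omega

theorem stmt7 (M L S : ℕ) (hM : 0 < M) (hL : 0 < L) (hS : 0 < S)
    (a : ℕ → ℕ → ℂ)
    (hunit : ∀ i < M, ∀ k < L, ‖a i k‖ = 1)
    (hmscs : ∀ τ, 0 < τ → τ < L → S ∣ τ →
      ∑ i ∈ Finset.range M, aacf L (a i) τ = 0)
    (ζ : ℂ) (hζ : ζ = Complex.exp (2 * (Real.pi : ℂ) * Complex.I / (S : ℂ)))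
    (z : ℂ) (hz : ‖z‖ = 1) :
    ∑ i ∈ Finset.range M, ∑ u ∈ Finset.range S,
      ‖∑ k ∈ Finset.range L, a i k * ζ ^ (k * u) * z ^ k‖ ^ 2
      = (M : ℝ) * L * S := by
  have hSne : S ≠ 0 := hS.ne'
  have hprim : IsPrimitiveRoot ζ S := by
    rw [hζ]; exact Complex.isPrimitiveRoot_exp S hSne
  have hζS : ζ ^ S = 1 := hprim.pow_eq_one
  have hζ0 : ζ ≠ 0 := by
    intro h
    rw [h, zero_pow hSne] at hζS
    exact zero_ne_one hζS
  have hnζ : ‖ζ‖ = 1 := by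
    rw [hζ, show 2 * (Real.pi : ℂ) * Complex.I / (S : ℂ)
        = ((2 * Real.pi / S : ℝ) : ℂ) * Complex.I by push_cast; ring]
    exact Complex.norm_exp_ofReal_mul_I _
  have hconjζ : (starRingEnd ℂ) ζ = ζ⁻¹ := by
    rw [Complex.inv_eq_conj]
    rw [hnζ]
  have hzsq : z * (starRingEnd ℂ) z = 1 := by
    rw [Complex.mul_conj]
    rw [Complex.normSq_eq_norm_sq, hz]
    norm_num
  -- key character sum
  have key : ∀ k l : ℕ, ∑ u ∈ range S, ζ ^ (k * u) * (starRingEnd ℂ) (ζ ^ (l * u))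
      = if ((S : ℤ) ∣ (k : ℤ) - (l : ℤ)) then (S : ℂ) else 0 := by
    intro k l
    have hterm : ∀ u : ℕ, ζ ^ (k * u) * (starRingEnd ℂ) (ζ ^ (l * u))
        = (ζ ^ ((k : ℤ) - (l : ℤ))) ^ u := by
      intro u
      rw [map_pow, hconjζ, inv_pow, ← zpow_natCast ζ (k * u), ← zpow_natCast ζ (l * u),
        ← zpow_neg, ← zpow_add₀ hζ0, ← zpow_natCast (ζ ^ ((k : ℤ) - (l : ℤ))) u, ← zpow_mul]
      congr 1
      push_cast
      ring
    simp_rw [hterm]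
    rw [geom_aux S _ (by
      rw [← zpow_natCast (ζ ^ ((k : ℤ) - (l : ℤ))) S, ← zpow_mul, mul_comm, zpow_mul,
        zpow_natCast, hζS, one_zpow])]
    simp only [hprim.zpow_eq_one_iff_dvd]
  set b : ℕ → ℕ → ℂ := fun i k => a i k * z ^ k with hb
  set G : ℕ → ℕ → ℂ := fun k l =>
    ∑ i ∈ range M, (if ((S : ℤ) ∣ (k : ℤ) - (l : ℤ)) then b i k * (starRingEnd ℂ) (b i l) else 0)
    with hG
  -- expansion of the square
  have expand : ∑ i ∈ range M, ∑ u ∈ range S,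
      (∑ k ∈ range L, a i k * ζ ^ (k * u) * z ^ k)
        * (starRingEnd ℂ) (∑ k ∈ range L, a i k * ζ ^ (k * u) * z ^ k)
      = (S : ℂ) * ∑ p ∈ (range L ×ˢ range L), G p.1 p.2 := by
    have h1 : ∀ i u, (∑ k ∈ range L, a i k * ζ ^ (k * u) * z ^ k)
        * (starRingEnd ℂ) (∑ k ∈ range L, a i k * ζ ^ (k * u) * z ^ k)
        = ∑ k ∈ range L, ∑ l ∈ range L,
            (b i k * (starRingEnd ℂ) (b i l)) * (ζ ^ (k * u) * (starRingEnd ℂ) (ζ ^ (l * u))) := by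
      intro i u
      rw [map_sum, Finset.sum_mul_sum]
      apply Finset.sum_congr rfl; intro k _
      apply Finset.sum_congr rfl; intro l _
      simp only [map_mul, hb]
      ring
    have h2 : ∀ i, ∑ u ∈ range S, ∑ k ∈ range L, ∑ l ∈ range L,
        (b i k * (starRingEnd ℂ) (b i l)) * (ζ ^ (k * u) * (starRingEnd ℂ) (ζ ^ (l * u)))
        = ∑ k ∈ range L, ∑ l ∈ range L, (S : ℂ) *
            (if ((S : ℤ) ∣ (k : ℤ) - (l : ℤ)) then b i k * (starRingEnd ℂ) (b i l) else 0) := by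
      intro i
      rw [Finset.sum_comm]
      apply Finset.sum_congr rfl; intro k _
      rw [Finset.sum_comm]
      apply Finset.sum_congr rfl; intro l _
      rw [← Finset.mul_sum, key k l]
      split_ifs <;> ring
    simp_rw [h1, h2]
    rw [Finset.mul_sum, Finset.sum_product]
    rw [Finset.sum_comm]
    apply Finset.sum_congr rfl; intro k _
    rw [Finset.sum_comm]
    apply Finset.sum_congr rfl; intro l _
    rw [hG, Finset.mul_sum]
  -- split the pair sum
  have hsplit : ∑ p ∈ (range L ×ˢ range L), G p.1 p.2
      = (∑ k ∈ range L, G k k)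
      + ((∑ p ∈ (range L ×ˢ range L).filter (fun p => p.1 < p.2), G p.1 p.2)
      + (∑ p ∈ (range L ×ˢ range L).filter (fun p => p.2 < p.1), G p.1 p.2)) := by
    rw [← Finset.sum_filter_add_sum_filter_not (range L ×ˢ range L) (fun p => p.1 = p.2)
      (fun p => G p.1 p.2)]
    congr 1
    · refine Finset.sum_nbij' (fun p => p.1) (fun k => (k, k)) ?_ ?_ ?_ ?_ ?_
      · rintro ⟨k, l⟩ hp
        simp only [Finset.mem_filter, Finset.mem_product, Finset.mem_range] at hp ⊢
        omega
      · intro k hk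
        exact Finset.mem_filter.mpr ⟨Finset.mem_product.mpr ⟨hk, hk⟩, rfl⟩
      · rintro ⟨k, l⟩ hp
        simp only [Finset.mem_filter, Finset.mem_product, Finset.mem_range] at hp
        simp [hp.2]
      · intro k _
        rfl
      · rintro ⟨k, l⟩ hp
        simp only [Finset.mem_filter, Finset.mem_product, Finset.mem_range] at hp
        rw [← hp.2]
    · rw [← Finset.sum_filter_add_sum_filter_not
        ((range L ×ˢ range L).filter (fun p => ¬ p.1 = p.2)) (fun p => p.1 < p.2)
        (fun p => G p.1 p.2)]
      rw [Finset.filter_filter, Finset.filter_filter]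
      congr 1
      · apply Finset.sum_congr _ (fun _ _ => rfl)
        ext p
        simp only [Finset.mem_filter, Finset.mem_product, Finset.mem_range]
        omega
      · apply Finset.sum_congr _ (fun _ _ => rfl)
        ext p
        simp only [Finset.mem_filter, Finset.mem_product, Finset.mem_range]
        omega
  -- diagonal part
  have hdiag : ∑ k ∈ range L, G k k = (M : ℂ) * L := by
    have hGk : ∀ k ∈ range L, G k k = (M : ℂ) := by
      intro k hk
      rw [hG]
      dsimp only
      rw [Finset.sum_congr rfl (g := fun _ => (1 : ℂ)) (fun i hi => ?_)]
      · rw [Finset.sum_const, card_range, nsmul_eq_mul, mul_one]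
      · rw [if_pos (by simp), Complex.mul_conj]
        have h1 : ‖b i k‖ = 1 := by
          simp only [hb, norm_mul, norm_pow,
            hunit i (Finset.mem_range.mp hi) k (Finset.mem_range.mp hk), hz]
          norm_num
        rw [Complex.normSq_eq_norm_sq, h1]
        norm_num
    rw [Finset.sum_congr rfl hGk, Finset.sum_const, card_range, nsmul_eq_mul, mul_comm]
  -- upper part
  have hupper : ∑ p ∈ (range L ×ˢ range L).filter (fun p => p.1 < p.2), G p.1 p.2 = 0 := by
    rw [upper_reindex L G]
    apply Finset.sum_eq_zero
    intro τ hτ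
    simp only [Finset.mem_Ico] at hτ
    by_cases hdvd : S ∣ τ
    · have hcond : ∀ k : ℕ, ((S : ℤ) ∣ (k : ℤ) - ((k + τ : ℕ) : ℤ)) := by
        intro k
        push_cast
        rw [show (k : ℤ) - ((k : ℤ) + τ) = -τ by ring]
        exact dvd_neg.mpr (Int.natCast_dvd_natCast.mpr hdvd)
      have hGkk : ∀ k, G k (k + τ) = ∑ i ∈ range M,
          ((starRingEnd ℂ) z) ^ τ * (a i k * (starRingEnd ℂ) (a i (k + τ))) := by
        intro k
        rw [hG]
        dsimp only
        apply Finset.sum_congr rfl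
        intro i _
        rw [if_pos (hcond k), hb]
        dsimp only
        rw [map_mul, map_pow, pow_add,
          show a i k * z ^ k * ((starRingEnd ℂ) (a i (k + τ)) *
            ((starRingEnd ℂ) z ^ k * (starRingEnd ℂ) z ^ τ))
            = ((z * (starRingEnd ℂ) z) ^ k) *
              ((starRingEnd ℂ) z ^ τ * (a i k * (starRingEnd ℂ) (a i (k + τ))))
            by rw [mul_pow]; ring,
          hzsq, one_pow, one_mul]
      simp_rw [hGkk]
      rw [Finset.sum_comm]
      have : ∀ i ∈ range M, ∑ k ∈ range (L - τ),
          ((starRingEnd ℂ) z) ^ τ * (a i k * (starRingEnd ℂ) (a i (k + τ)))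
          = ((starRingEnd ℂ) z) ^ τ * aacf L (a i) τ := by
        intro i _
        rw [aacf, Finset.mul_sum]
      rw [Finset.sum_congr rfl this, ← Finset.mul_sum, hmscs τ hτ.1 hτ.2 hdvd, mul_zero]
    · apply Finset.sum_eq_zero
      intro k _
      rw [hG]
      dsimp only
      apply Finset.sum_eq_zero
      intro i _
      rw [if_neg]
      intro h
      apply hdvd
      have : (S : ℤ) ∣ (τ : ℤ) := by
        have h2 : (k : ℤ) - ((k + τ : ℕ) : ℤ) = -(τ : ℤ) := by push_cast; ring
        rw [h2, dvd_neg] at h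
        exact h
      exact_mod_cast this
  -- lower part
  have hlower : ∑ p ∈ (range L ×ˢ range L).filter (fun p => p.2 < p.1), G p.1 p.2 = 0 := by
    rw [lower_reindex L G]
    apply Finset.sum_eq_zero
    intro τ hτ
    simp only [Finset.mem_Ico] at hτ
    by_cases hdvd : S ∣ τ
    · have hcond : ∀ k : ℕ, ((S : ℤ) ∣ ((k + τ : ℕ) : ℤ) - (k : ℤ)) := by
        intro k
        push_cast
        rw [show (k : ℤ) + τ - k = (τ : ℤ) by ring]
        exact Int.natCast_dvd_natCast.mpr hdvd
      have hGkk : ∀ k, G (k + τ) k = ∑ i ∈ range M,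
          z ^ τ * (a i (k + τ) * (starRingEnd ℂ) (a i k)) := by
        intro k
        rw [hG]
        dsimp only
        apply Finset.sum_congr rfl
        intro i _
        rw [if_pos (hcond k), hb]
        dsimp only
        rw [map_mul, map_pow, pow_add,
          show a i (k + τ) * (z ^ k * z ^ τ) * ((starRingEnd ℂ) (a i k) * (starRingEnd ℂ) z ^ k)
            = ((z * (starRingEnd ℂ) z) ^ k) * (z ^ τ * (a i (k + τ) * (starRingEnd ℂ) (a i k)))
            by rw [mul_pow]; ring,
          hzsq, one_pow, one_mul]
      simp_rw [hGkk]
      rw [Finset.sum_comm]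
      have hconjaacf : ∀ i, ∑ k ∈ range (L - τ), a i (k + τ) * (starRingEnd ℂ) (a i k)
          = (starRingEnd ℂ) (aacf L (a i) τ) := by
        intro i
        rw [aacf, map_sum]
        apply Finset.sum_congr rfl
        intro k _
        rw [map_mul, Complex.conj_conj, mul_comm]
      have : ∀ i ∈ range M, ∑ k ∈ range (L - τ),
          z ^ τ * (a i (k + τ) * (starRingEnd ℂ) (a i k))
          = z ^ τ * (starRingEnd ℂ) (aacf L (a i) τ) := by
        intro i _
        rw [← hconjaacf i, Finset.mul_sum]
      rw [Finset.sum_congr rfl this, ← Finset.mul_sum, ← map_sum,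
        hmscs τ hτ.1 hτ.2 hdvd, map_zero, mul_zero]
    · apply Finset.sum_eq_zero
      intro k _
      rw [hG]
      dsimp only
      apply Finset.sum_eq_zero
      intro i _
      rw [if_neg]
      intro h
      apply hdvd
      have : (S : ℤ) ∣ (τ : ℤ) := by
        have h2 : ((k + τ : ℕ) : ℤ) - (k : ℤ) = (τ : ℤ) := by push_cast; ring
        rwa [h2] at h
      exact_mod_cast this
  have main : ∑ i ∈ range M, ∑ u ∈ range S,
      (∑ k ∈ range L, a i k * ζ ^ (k * u) * z ^ k)
        * (starRingEnd ℂ) (∑ k ∈ range L, a i k * ζ ^ (k * u) * z ^ k)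
      = (M : ℂ) * L * S := by
    rw [expand, hsplit, hdiag, hupper, hlower]
    ring
  have cast1 : ∀ w : ℂ, ((‖w‖ : ℝ) : ℂ) ^ 2 = w * (starRingEnd ℂ) w := by
    intro w
    rw [← Complex.ofReal_pow, Complex.sq_norm, Complex.mul_conj]
  apply Complex.ofReal_injective
  push_cast
  simp_rw [cast1]
  exact main
end

section
/- Let p be a prime, m ≥ 1 and 1 ≤ s ≤ m integers, λ a positive integer with p ∣ λ, and π a permutation of {s, s+1, …, m}. Fix g_1, …, g_m, g ∈ ℤ_λ and an arbitrary function h : ℤ_p^{s−1} → ℤ_λ (with h = 0 when s = 1). Define f : ℤ_p^m → ℤ_λ by f(v_1, …, v_m) = (λ/p)·Σ_{i=s}^{m−1} v_{π(i)} v_{π(i+1)} + Σ_{i=1}^{m} g_i v_i + g + h(v_1, …, v_{s−1}) (mod λ), and for each γ ∈ ℤ_p define a^γ = f + (λ/p)·v_{π(s)}·γ (mod λ). Let i and j be integers in {0, …, p^m − 1} whose base-p digit vectors (i_1, …, i_m) and (j_1, …, j_m) satisfy i_{π(s)} ≠ j_{π(s)}. Then Σ_{γ=0}^{p−1} ω_λ^{a^γ(i_1,…,i_m)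 − a^γ(j_1,…,j_m)} = 0, where ω_λ = exp(2π√−1/λ). -/
open Finset

/-- `dig p i k` is the `k`-th base-`p` digit (1-indexed) of `i`, viewed in `ℤ_p`. -/
def dig (p i : ℕ) (k : ℕ) : ZMod p :=
  (((i / p ^ (k - 1)) % p : ℕ) : ZMod p)


lemma eZMod_eq_pow (q : ℕ) (x : ZMod q) :
    eZMod q x = Complex.exp (2 * Real.pi * Complex.I / q) ^ x.val := by
  rw [eZMod, ← Complex.exp_nat_mul]
  ring_nf

lemma eZMod_zero (q : ℕ) [NeZero q] : eZMod q 0 = 1 := by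
  rw [eZMod_eq_pow, ZMod.val_zero, pow_zero]

lemma eZMod_add (q : ℕ) [NeZero q] (x y : ZMod q) :
    eZMod q (x + y) = eZMod q x * eZMod q y := by
  have hq : q ≠ 0 := NeZero.ne q
  have hζ : IsPrimitiveRoot (Complex.exp (2 * Real.pi * Complex.I / q)) q :=
    Complex.isPrimitiveRoot_exp q hq
  rw [eZMod_eq_pow, eZMod_eq_pow, eZMod_eq_pow, ← pow_add, ZMod.val_add]
  conv_rhs => rw [← Nat.mod_add_div (x.val + y.val) q]
  rw [pow_add, pow_mul, hζ.pow_eq_one, one_pow, mul_one]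

lemma eZMod_nsmul (q : ℕ) [NeZero q] (n : ℕ) (x : ZMod q) :
    eZMod q (n • x) = eZMod q x ^ n := by
  induction n with
  | zero => simpa using eZMod_zero q
  | succ k ih => rw [succ_nsmul, eZMod_add, ih, pow_succ]

lemma eZMod_eq_one_iff (q : ℕ) [NeZero q] (x : ZMod q) :
    eZMod q x = 1 ↔ x = 0 := by
  have hq : q ≠ 0 := NeZero.ne q
  have hζ : IsPrimitiveRoot (Complex.exp (2 * Real.pi * Complex.I / q)) q :=
    Complex.isPrimitiveRoot_exp q hq
  rw [eZMod_eq_pow, hζ.pow_eq_one_iff_dvd, ← ZMod.val_eq_zero]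
  constructor
  · intro hd
    exact Nat.eq_zero_of_dvd_of_lt hd (ZMod.val_lt x)
  · intro h0; rw [h0]; exact dvd_zero q

theorem stmt9 (p m s lam : ℕ) (hp : p.Prime) (hm : 1 ≤ m) (hs : 1 ≤ s) (hsm : s ≤ m)
    (hlam : 0 < lam) (hpl : p ∣ lam)
    (π : Equiv.Perm ℕ) (hπ : ∀ i ∈ Finset.Icc s m, π i ∈ Finset.Icc s m)
    (g : ℕ → ZMod lam) (g₀ : ZMod lam)
    (h : (ℕ → ZMod p) → ZMod lam)
    (hdep : ∀ u w : ℕ → ZMod p, (∀ t, 1 ≤ t → t ≤ s - 1 → u t = w t) → h u = h w)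
    (hs1 : s = 1 → ∀ u, h u = 0)
    (f : (ℕ → ZMod p) → ZMod lam)
    (hf : ∀ v : ℕ → ZMod p,
      f v = ((lam / p : ℕ) : ZMod lam) *
            (∑ i ∈ Finset.Ico s m, ((v (π i)).val : ZMod lam) * ((v (π (i + 1))).val : ZMod lam))
        + ∑ i ∈ Finset.Icc 1 m, g i * ((v i).val : ZMod lam) + g₀ + h v)
    (a : ZMod p → (ℕ → ZMod p) → ZMod lam)
    (ha : ∀ (γ : ZMod p) (v : ℕ → ZMod p),
      a γ v = f v + ((lam / p : ℕ) : ZMod lam) * ((v (π s)).val : ZMod lam) * (γ.val : ZMod lam))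
    (i j : ℕ) (hi : i < p ^ m) (hj : j < p ^ m)
    (hne : dig p i (π s) ≠ dig p j (π s)) :
    ∑ γ ∈ Finset.range p,
      eZMod lam (a (γ : ZMod p) (dig p i) - a (γ : ZMod p) (dig p j)) = 0 := by

  haveI : NeZero lam := ⟨hlam.ne'⟩
  haveI : Fact p.Prime := ⟨hp⟩
  set bi : ℕ := (dig p i (π s)).val with hbi
  set bj : ℕ := (dig p j (π s)).val with hbj
  set C : ZMod lam := f (dig p i) - f (dig p j) with hC
  set D : ZMod lam := ((lam / p : ℕ) : ZMod lam) * ((bi : ZMod lam) - (bj : ZMod lam)) with hD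
  have key : ∀ γ ∈ Finset.range p,
      a (γ : ZMod p) (dig p i) - a (γ : ZMod p) (dig p j) = C + γ • D := by
    intro γ hγ
    have hv : ((γ : ZMod p)).val = γ := ZMod.val_natCast_of_lt (Finset.mem_range.mp hγ)
    rw [ha, ha, hv, hC, hD, nsmul_eq_mul]
    push_cast
    ring
  have hDne : D ≠ 0 := by
    intro h0
    have hbne : bi ≠ bj := fun hEq => hne (ZMod.val_injective _ hEq)
    have hD' : ((((lam / p : ℕ) : ℤ) * ((bi : ℤ) - (bj : ℤ)) : ℤ) : ZMod lam) = 0 := by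
      rw [← h0, hD]
      simp only [Int.cast_mul, Int.cast_sub, Int.cast_natCast]
    rw [ZMod.intCast_zmod_eq_zero_iff_dvd] at hD'
    have hlp : p * (lam / p) = lam := Nat.mul_div_cancel' hpl
    have hqpos : 0 < lam / p := Nat.div_pos (Nat.le_of_dvd hlam hpl) hp.pos
    have hd2 : ((p : ℤ) * (lam / p : ℕ)) ∣ ((lam / p : ℕ) : ℤ) * ((bi : ℤ) - (bj : ℤ)) := by
      rw [show ((p : ℤ) * (lam / p : ℕ)) = ((lam : ℕ) : ℤ) by exact_mod_cast hlp]
      convert hD' using 1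
    have hd3 : (p : ℤ) ∣ ((bi : ℤ) - (bj : ℤ)) := by
      rcases hd2 with ⟨c, hc⟩
      have hqz : ((lam / p : ℕ) : ℤ) ≠ 0 := by exact_mod_cast hqpos.ne'
      have : ((lam / p : ℕ) : ℤ) * ((bi : ℤ) - (bj : ℤ)) = ((lam / p : ℕ) : ℤ) * ((p : ℤ) * c) := by
        rw [hc]; ring
      exact ⟨c, mul_left_cancel₀ hqz this⟩
    have hbilt : bi < p := ZMod.val_lt _
    have hbjlt : bj < p := ZMod.val_lt _
    have : (bi : ℤ) - (bj : ℤ) = 0 := by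
      refine Int.eq_zero_of_abs_lt_dvd hd3 ?_
      rw [abs_sub_lt_iff]
      omega
    exact hbne (by omega)
  have hz1 : eZMod lam D ≠ 1 := fun hEq => hDne ((eZMod_eq_one_iff lam D).mp hEq)
  have hzp : (eZMod lam D) ^ p = 1 := by
    rw [← eZMod_nsmul]
    have : (p : ℕ) • D = 0 := by
      rw [nsmul_eq_mul, hD]
      rw [← mul_assoc]
      have : ((p : ℕ) : ZMod lam) * ((lam / p : ℕ) : ZMod lam) = 0 := by
        rw [← Nat.cast_mul, Nat.mul_div_cancel' hpl, ZMod.natCast_self]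
      rw [this, zero_mul]
    rw [this, eZMod_zero]
  calc ∑ γ ∈ Finset.range p,
        eZMod lam (a (γ : ZMod p) (dig p i) - a (γ : ZMod p) (dig p j))
      = ∑ γ ∈ Finset.range p, eZMod lam C * (eZMod lam D) ^ γ := by
        refine Finset.sum_congr rfl fun γ hγ => ?_
        rw [key γ hγ, eZMod_add, eZMod_nsmul]
    _ = eZMod lam C * ∑ γ ∈ Finset.range p, (eZMod lam D) ^ γ := by rw [Finset.mul_sum]
    _ = 0 := by rw [geom_sum_eq hz1, hzp, sub_self, zero_div, mul_zero]
end
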